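/- (Relation to optimistic fixed-length source coding.) For any general source X, any R ≥ 0, and any ε, δ ∈ [0,1) satisfying ε + δ < 1, it holds that R*(ε,δ|X) = R^f(ε+δ|X) = H̄*_{ε+δ}(X) and L*(ε,δ,R|X) = L^f(ε+δ,R|X) = H̄*_{ε+δ}(R|X). -/

import Mathlib

open Filter MeasureTheory

namespace NY

/-- A probability distribution on a set, given by its point mass function. -/
structure Dist (α : Type*) where
  p : α → ℝ
  nonneg : ∀ x, 0 ≤ p x
  hasSum : HasSum p 1

/-- The probability of a set under a distribution. -/
noncomputable def Dist.pr {α : Type*} (P : Dist α) (A : Set α) : ℝ := ∑' x : A, P.p x.1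

/-- 𝒰* : nonempty finite strings over the code alphabet 𝒰 = {1,…,K}. -/
abbrev Word (K : ℕ) := {u : List (Fin K) // u ≠ []}

/-- Length of a string, as a real number. -/
noncomputable def wlen {K : ℕ} (u : Word K) : ℝ := u.1.length

/-- Error probability of a variable-length code (φ, ψ). -/
noncomputable def errP {α : Type*} {K : ℕ} (P : Dist α) (φ : α → Word K) (ψ : Word K → α) : ℝ :=
  P.pr {x | ψ (φ x) ≠ x}

/-- Overflow probability of an encoder φ with threshold η. -/
noncomputable def ovP {α : Type*} {K : ℕ} (P : Dist α) (φ : α → Word K) (η : ℝ) : ℝ :=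
  P.pr {x | wlen (φ x) > η}

/-- A general source: for each blocklength n, a distribution on 𝒳^n. -/
abbrev Source (𝒳 : Type*) := (n : ℕ) → Dist (Fin n → 𝒳)

/-- The limit as ν ↓ 0 of a function g which is nonincreasing in ν
(the limit exists by monotonicity and equals the supremum over ν > 0). -/
noncomputable def limNu (g : ℝ → ℝ) : ℝ := sSup (g '' Set.Ioi (0 : ℝ))

variable {𝒳 : Type*}

/-- A rate R ≥ 0 is (ε,δ)-achievable. -/
def FirstAch (K : ℕ) (X : Source 𝒳) (ε δ R : ℝ) : Prop :=
  0 ≤ R ∧ ∃ (φ : ∀ n, (Fin n → 𝒳) → Word K) (ψ : ∀ n, Word K → (Fin n → 𝒳)),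
    limsup (fun n => errP (X n) (φ n) (ψ n)) atTop ≤ ε ∧
    limsup (fun n => ovP (X n) (φ n) ((n : ℝ) * R)) atTop ≤ δ

/-- The first-order (ε,δ)-optimum threshold R(ε,δ|X). -/
noncomputable def Ropt (K : ℕ) (X : Source 𝒳) (ε δ : ℝ) : ℝ :=
  sInf {R | FirstAch K X ε δ R}

/-- L is (ε,δ,R)-achievable (second order). -/
def SecondAch (K : ℕ) (X : Source 𝒳) (ε δ R L : ℝ) : Prop :=
  ∃ (φ : ∀ n, (Fin n → 𝒳) → Word K) (ψ : ∀ n, Word K → (Fin n → 𝒳)),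
    limsup (fun n => errP (X n) (φ n) (ψ n)) atTop ≤ ε ∧
    limsup (fun n => ovP (X n) (φ n) ((n : ℝ) * R + Real.sqrt (n : ℝ) * L)) atTop ≤ δ

/-- The second-order (ε,δ,R)-optimum threshold L(ε,δ,R|X). -/
noncomputable def Lopt (K : ℕ) (X : Source 𝒳) (ε δ R : ℝ) : ℝ :=
  sInf {L | SecondAch K X ε δ R L}

/-- A rate R ≥ 0 is optimistically (ε,δ)-achievable. -/
def OptFirstAch (K : ℕ) (X : Source 𝒳) (ε δ R : ℝ) : Prop :=
  0 ≤ R ∧ ∃ (φ : ∀ n, (Fin n → 𝒳) → Word K) (ψ : ∀ n, Word K → (Fin n → 𝒳)),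
    ∀ γ > (0 : ℝ), ∃ ns : ℕ → ℕ, StrictMono ns ∧ ∀ i,
      errP (X (ns i)) (φ (ns i)) (ψ (ns i)) ≤ ε + γ ∧
      ovP (X (ns i)) (φ (ns i)) ((ns i : ℝ) * R) ≤ δ + γ

/-- The optimistic first-order (ε,δ)-optimum threshold R*(ε,δ|X). -/
noncomputable def RoptStar (K : ℕ) (X : Source 𝒳) (ε δ : ℝ) : ℝ :=
  sInf {R | OptFirstAch K X ε δ R}

/-- L is optimistically (ε,δ,R)-achievable. -/
def OptSecondAch (K : ℕ) (X : Source 𝒳) (ε δ R L : ℝ) : Prop :=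
  ∃ (φ : ∀ n, (Fin n → 𝒳) → Word K) (ψ : ∀ n, Word K → (Fin n → 𝒳)),
    ∀ γ > (0 : ℝ), ∃ ns : ℕ → ℕ, StrictMono ns ∧ ∀ i,
      errP (X (ns i)) (φ (ns i)) (ψ (ns i)) ≤ ε + γ ∧
      ovP (X (ns i)) (φ (ns i)) ((ns i : ℝ) * R + Real.sqrt (ns i : ℝ) * L) ≤ δ + γ

/-- The optimistic second-order (ε,δ,R)-optimum threshold L*(ε,δ,R|X). -/
noncomputable def LoptStar (K : ℕ) (X : Source 𝒳) (ε δ R : ℝ) : ℝ :=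
  sInf {L | OptSecondAch K X ε δ R L}

/-- A rate R ≥ 0 is type I (ε,δ)-achievable. -/
def TypeIAch (K : ℕ) (X : Source 𝒳) (ε δ R : ℝ) : Prop :=
  0 ≤ R ∧ ∃ (φ : ∀ n, (Fin n → 𝒳) → Word K) (ψ : ∀ n, Word K → (Fin n → 𝒳)),
    limsup (fun n => errP (X n) (φ n) (ψ n)) atTop ≤ ε ∧
    liminf (fun n => ovP (X n) (φ n) ((n : ℝ) * R)) atTop ≤ δ

/-- R†(ε,δ|X). -/
noncomputable def Rdagger (K : ℕ) (X : Source 𝒳) (ε δ : ℝ) : ℝ :=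
  sInf {R | TypeIAch K X ε δ R}

/-- A rate R ≥ 0 is type II (ε,δ)-achievable. -/
def TypeIIAch (K : ℕ) (X : Source 𝒳) (ε δ R : ℝ) : Prop :=
  0 ≤ R ∧ ∃ (φ : ∀ n, (Fin n → 𝒳) → Word K) (ψ : ∀ n, Word K → (Fin n → 𝒳)),
    liminf (fun n => errP (X n) (φ n) (ψ n)) atTop ≤ ε ∧
    limsup (fun n => ovP (X n) (φ n) ((n : ℝ) * R)) atTop ≤ δ

/-- R‡(ε,δ|X). -/
noncomputable def Rddagger (K : ℕ) (X : Source 𝒳) (ε δ : ℝ) : ℝ :=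
  sInf {R | TypeIIAch K X ε δ R}

/-- H̄_γ(X) := inf{ R : limsup_n Pr{ (1/n) log(1/P_{X^n}(X^n)) > R } ≤ γ }. -/
noncomputable def Hbar (K : ℕ) (X : Source 𝒳) (γ : ℝ) : ℝ :=
  sInf {R | limsup (fun n =>
    (X n).pr {x | Real.logb (K : ℝ) (1 / (X n).p x) / (n : ℝ) > R}) atTop ≤ γ}

/-- H̄*_γ(X) (optimistic version, with liminf). -/
noncomputable def HbarStar (K : ℕ) (X : Source 𝒳) (γ : ℝ) : ℝ :=
  sInf {R | liminf (fun n =>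
    (X n).pr {x | Real.logb (K : ℝ) (1 / (X n).p x) / (n : ℝ) > R}) atTop ≤ γ}

/-- H̄_γ(R|X) := inf{ L : limsup_n Pr{ (1/n) log(1/P_{X^n}(X^n)) > R + L/√n } ≤ γ }. -/
noncomputable def Hbar2 (K : ℕ) (X : Source 𝒳) (γ R : ℝ) : ℝ :=
  sInf {L | limsup (fun n =>
    (X n).pr {x | Real.logb (K : ℝ) (1 / (X n).p x) / (n : ℝ)
      > R + L / Real.sqrt (n : ℝ)}) atTop ≤ γ}

/-- H̄*_γ(R|X) (optimistic version, with liminf). -/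
noncomputable def Hbar2Star (K : ℕ) (X : Source 𝒳) (γ R : ℝ) : ℝ :=
  sInf {L | liminf (fun n =>
    (X n).pr {x | Real.logb (K : ℝ) (1 / (X n).p x) / (n : ℝ)
      > R + L / Real.sqrt (n : ℝ)}) atTop ≤ γ}

/-- F(ε,R) := limsup_n inf_{A : Pr(A) ≥ 1−ε} Pr{ −(1/n) log P_{X^n}(X^n) ≥ R, X^n ∈ A }. -/
noncomputable def Fspec (K : ℕ) (X : Source 𝒳) (ε R : ℝ) : ℝ :=
  limsup (fun n =>
    sInf ((fun A : Set (Fin n → 𝒳) =>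
        (X n).pr (A ∩ {x | -Real.logb (K : ℝ) ((X n).p x) / (n : ℝ) ≥ R})) ''
      {A | (X n).pr A ≥ 1 - ε})) atTop

/-- H̃_{ε,δ}(X) := inf{ R : F(ε,R) ≤ δ }. -/
noncomputable def Htilde (K : ℕ) (X : Source 𝒳) (ε δ : ℝ) : ℝ :=
  sInf {R | Fspec K X ε R ≤ δ}

/-- G_{ε,δ}(X). -/
noncomputable def Gfirst (K : ℕ) (X : Source 𝒳) (ε δ : ℝ) : ℝ :=
  sInf {R | limNu (fun ν => limsup (fun n =>
    sInf ((fun A : Set (Fin n → 𝒳) =>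
        (X n).pr (A ∩ {x | -Real.logb (K : ℝ) ((X n).p x / (X n).pr A) / (n : ℝ) ≥ R})) ''
      {A | (X n).pr A ≥ 1 - ε - ν})) atTop) ≤ δ}

/-- G*_{ε,δ}(X) (optimistic version, with liminf). -/
noncomputable def GfirstStar (K : ℕ) (X : Source 𝒳) (ε δ : ℝ) : ℝ :=
  sInf {R | limNu (fun ν => liminf (fun n =>
    sInf ((fun A : Set (Fin n → 𝒳) =>
        (X n).pr (A ∩ {x | -Real.logb (K : ℝ) ((X n).p x / (X n).pr A) / (n : ℝ) ≥ R})) ''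
      {A | (X n).pr A ≥ 1 - ε - ν})) atTop) ≤ δ}

/-- G_{ε,δ}(R|X). -/
noncomputable def Gsecond (K : ℕ) (X : Source 𝒳) (ε δ R : ℝ) : ℝ :=
  sInf {L | limNu (fun ν => limsup (fun n =>
    sInf ((fun A : Set (Fin n → 𝒳) =>
        (X n).pr (A ∩ {x | -Real.logb (K : ℝ) ((X n).p x / (X n).pr A) / (n : ℝ)
          ≥ R + L / Real.sqrt (n : ℝ)})) ''
      {A | (X n).pr A ≥ 1 - ε - ν})) atTop) ≤ δ}

/-- G*_{ε,δ}(R|X) (optimistic version, with liminf). -/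
noncomputable def GsecondStar (K : ℕ) (X : Source 𝒳) (ε δ R : ℝ) : ℝ :=
  sInf {L | limNu (fun ν => liminf (fun n =>
    sInf ((fun A : Set (Fin n → 𝒳) =>
        (X n).pr (A ∩ {x | -Real.logb (K : ℝ) ((X n).p x / (X n).pr A) / (n : ℝ)
          ≥ R + L / Real.sqrt (n : ℝ)})) ''
      {A | (X n).pr A ≥ 1 - ε - ν})) atTop) ≤ δ}

/-- A rate R is optimistically ε-achievable by fixed-length codes. -/
def FixAchR (K : ℕ) (X : Source 𝒳) (ε R : ℝ) : Prop :=
  ∃ (M : ℕ → ℕ) (φ : ∀ n, (Fin n → 𝒳) → Fin (M n)) (ψ : ∀ n, Fin (M n) → (Fin n → 𝒳)),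
    ∀ γ > (0 : ℝ), ∃ ns : ℕ → ℕ, StrictMono ns ∧ ∀ i,
      (X (ns i)).pr {x | ψ (ns i) (φ (ns i) x) ≠ x} ≤ ε + γ ∧
      Real.logb (K : ℝ) (M (ns i) : ℝ) / (ns i : ℝ) ≤ R + γ

/-- R^f(ε|X). -/
noncomputable def Rfix (K : ℕ) (X : Source 𝒳) (ε : ℝ) : ℝ :=
  sInf {R | FixAchR K X ε R}

/-- A real L is optimistically (ε,R)-achievable by fixed-length codes. -/
def FixAchL (K : ℕ) (X : Source 𝒳) (ε R L : ℝ) : Prop :=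
  ∃ (M : ℕ → ℕ) (φ : ∀ n, (Fin n → 𝒳) → Fin (M n)) (ψ : ∀ n, Fin (M n) → (Fin n → 𝒳)),
    ∀ γ > (0 : ℝ), ∃ ns : ℕ → ℕ, StrictMono ns ∧ ∀ i,
      (X (ns i)).pr {x | ψ (ns i) (φ (ns i) x) ≠ x} ≤ ε + γ ∧
      Real.logb (K : ℝ) ((M (ns i) : ℝ) / (K : ℝ) ^ ((ns i : ℝ) * R)) / Real.sqrt (ns i : ℝ)
        ≤ L + γ

/-- L^f(ε,R|X). -/
noncomputable def Lfix (K : ℕ) (X : Source 𝒳) (ε R : ℝ) : ℝ :=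
  sInf {L | FixAchL K X ε R L}

section Aux

namespace Dist

variable {α : Type*} (P : Dist α)

lemma summable' : Summable P.p := P.hasSum.summable

lemma pr_eq (A : Set α) : P.pr A = ∑' x, A.indicator P.p x := tsum_subtype A P.p

lemma summable_ind (A : Set α) : Summable (A.indicator P.p) := P.summable'.indicator A

lemma ind_nonneg (A : Set α) (x : α) : 0 ≤ A.indicator P.p x :=
  Set.indicator_nonneg (fun y _ => P.nonneg y) x

lemma pr_nonneg (A : Set α) : 0 ≤ P.pr A := tsum_nonneg (fun x => P.nonneg x)

lemma pr_mono {A B : Set α} (h : A ⊆ B) : P.pr A ≤ P.pr B := by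
  rw [P.pr_eq, P.pr_eq]
  exact (P.summable_ind A).tsum_le_tsum
    (fun x => Set.indicator_le_indicator_of_subset h (fun y => P.nonneg y) x)
    (P.summable_ind B)

lemma pr_union_le (A B : Set α) : P.pr (A ∪ B) ≤ P.pr A + P.pr B := by
  rw [P.pr_eq, P.pr_eq, P.pr_eq,
    ← Summable.tsum_add (P.summable_ind A) (P.summable_ind B)]
  refine (P.summable_ind _).tsum_le_tsum (fun x => ?_) ((P.summable_ind A).add (P.summable_ind B))
  by_cases hA : x ∈ A
  · rw [Set.indicator_of_mem (Set.mem_union_left B hA), Set.indicator_of_mem hA]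
    exact le_add_of_nonneg_right (P.ind_nonneg B x)
  · by_cases hB : x ∈ B
    · rw [Set.indicator_of_mem (Set.mem_union_right A hB), Set.indicator_of_notMem hA,
        Set.indicator_of_mem hB, zero_add]
    · rw [Set.indicator_of_notMem hA, Set.indicator_of_notMem hB,
        Set.indicator_of_notMem (by simp [hA, hB])]
      simp

lemma pr_univ : P.pr Set.univ = 1 := by
  rw [P.pr_eq, Set.indicator_univ]; exact P.hasSum.tsum_eq

lemma pr_le_one (A : Set α) : P.pr A ≤ 1 := by
  rw [← P.pr_univ]; exact P.pr_mono (Set.subset_univ A)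

lemma pr_empty : P.pr ∅ = 0 := by
  rw [P.pr_eq, Set.indicator_empty]; exact tsum_zero

lemma pr_singleton (a : α) : P.pr {a} = P.p a := tsum_singleton a P.p

lemma pr_zeroset : P.pr {x | P.p x = 0} = 0 := by
  have h : ∀ x : ({x | P.p x = 0} : Set α), P.p x.1 = 0 := fun x => x.2
  rw [Dist.pr, tsum_congr h, tsum_zero]

lemma pr_diff {A B : Set α} (h : A ⊆ B) : P.pr B = P.pr A + P.pr (B \ A) := by
  rw [P.pr_eq, P.pr_eq, P.pr_eq, ← Summable.tsum_add (P.summable_ind A) (P.summable_ind (B \ A))]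
  refine tsum_congr (fun x => ?_)
  by_cases hA : x ∈ A
  · rw [Set.indicator_of_mem (h hA), Set.indicator_of_mem hA,
      Set.indicator_of_notMem (by simp [hA]), add_zero]
  · by_cases hB : x ∈ B
    · rw [Set.indicator_of_mem hB, Set.indicator_of_notMem hA,
        Set.indicator_of_mem (by exact ⟨hB, hA⟩), zero_add]
    · rw [Set.indicator_of_notMem hB, Set.indicator_of_notMem hA,
        Set.indicator_of_notMem (by simp [hA, hB]), zero_add]

lemma pr_le_card_mul {A : Set α} {f : α → ℕ} {N : ℕ} {c : ℝ} (hinj : Set.InjOn f A)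
    (hfN : ∀ x ∈ A, f x < N) (hc : ∀ x ∈ A, P.p x ≤ c) (hc0 : 0 ≤ c) :
    P.pr A ≤ (N : ℝ) * c := by
  classical
  have hA : A.Finite := by
    refine Set.Finite.of_finite_image (Set.Finite.subset (Set.finite_Iio N) ?_) hinj
    rintro _ ⟨x, hx, rfl⟩; exact hfN x hx
  have h1 : P.pr A = ∑ x ∈ hA.toFinset, P.p x := by
    rw [P.pr_eq, tsum_eq_sum (s := hA.toFinset)
      (fun b hb => Set.indicator_of_notMem (by simpa using hb) _)]
    exact Finset.sum_congr rfl (fun x hx => Set.indicator_of_mem (by simpa using hx) _)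
  have hcard : hA.toFinset.card ≤ N := by
    have := Finset.card_le_card_of_injOn f
      (fun x hx => Finset.mem_range.mpr (hfN x (hA.mem_toFinset.mp hx)))
      (fun x hx y hy hfxy => hinj (hA.mem_toFinset.mp hx) (hA.mem_toFinset.mp hy) hfxy)
    simpa using this
  calc P.pr A = ∑ x ∈ hA.toFinset, P.p x := h1
    _ ≤ hA.toFinset.card • c := Finset.sum_le_card_nsmul _ _ _
        (fun x hx => hc x (hA.mem_toFinset.mp hx))
    _ = (hA.toFinset.card : ℝ) * c := nsmul_eq_mul _ _
    _ ≤ (N : ℝ) * c := mul_le_mul_of_nonneg_right (Nat.cast_le.mpr hcard) hc0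

lemma finite_ge {c : ℝ} (hc : 0 < c) : {x | c ≤ P.p x}.Finite := by
  rw [← Set.not_infinite]
  intro h
  obtain ⟨t, hts, htc⟩ := h.exists_subset_card_eq (⌈1/c⌉₊ + 1)
  have h1 : (t.card : ℝ) * c ≤ ∑ x ∈ t, P.p x := by
    simpa [nsmul_eq_mul] using Finset.card_nsmul_le_sum t P.p c (fun x hx => hts hx)
  have h2 : ∑ x ∈ t, P.p x ≤ 1 := by
    have h3 := P.summable'.sum_le_tsum t (fun i _ => P.nonneg i)
    rwa [P.hasSum.tsum_eq] at h3
  have h4 : (1:ℝ)/c ≤ (⌈1/c⌉₊ : ℝ) := Nat.le_ceil _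
  have h5 : (1:ℝ)/c * c = 1 := div_mul_cancel₀ 1 (ne_of_gt hc)
  rw [htc] at h1
  push_cast at h1
  nlinarith

lemma card_mul_le_one {c : ℝ} (hc : 0 < c) :
    ((P.finite_ge hc).toFinset.card : ℝ) * c ≤ 1 := by
  classical
  have h1 : ((P.finite_ge hc).toFinset.card : ℝ) * c ≤ ∑ x ∈ (P.finite_ge hc).toFinset, P.p x := by
    simpa [nsmul_eq_mul] using Finset.card_nsmul_le_sum (P.finite_ge hc).toFinset P.p c
      (fun x hx => ((P.finite_ge hc).mem_toFinset.mp hx))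
  have h2 : ∑ x ∈ (P.finite_ge hc).toFinset, P.p x ≤ 1 := by
    have h3 := P.summable'.sum_le_tsum (P.finite_ge hc).toFinset (fun i _ => P.nonneg i)
    rwa [P.hasSum.tsum_eq] at h3
  linarith

lemma nonempty (P : Dist α) : Nonempty α := by
  by_contra h
  have h0 : HasSum P.p 0 := by
    have : P.p = 0 := funext (fun x => ((not_nonempty_iff.mp h).false x).elim)
    rw [this]; exact hasSum_zero
  exact one_ne_zero (P.hasSum.unique h0)

end Dist

end Aux
namespace S17

/-- Injective encoding of K-ary strings into ℕ (bijective base-K numeration). -/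
def nuenc (K : ℕ) : List (Fin K) → ℕ
  | [] => 0
  | a :: t => (a.val + 1) + K * nuenc K t

lemma nuenc_inj {K : ℕ} (hK : 0 < K) : Function.Injective (nuenc K) := by
  intro l1
  induction l1 with
  | nil =>
    intro l2 h
    cases l2 with
    | nil => rfl
    | cons b t => simp only [nuenc] at h; omega
  | cons a t ih =>
    intro l2 h
    cases l2 with
    | nil => simp only [nuenc] at h; omega
    | cons b s =>
      simp only [nuenc] at h
      have hmod : (a.val + 1) % K = (b.val + 1) % K := by
        have h1 : ((a.val + 1) + K * nuenc K t) % K = (a.val + 1) % K :=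
          Nat.add_mul_mod_self_left _ _ _
        have h2 : ((b.val + 1) + K * nuenc K s) % K = (b.val + 1) % K :=
          Nat.add_mul_mod_self_left _ _ _
        rw [← h1, ← h2, h]
      have ha : a.val < K := a.isLt
      have hb : b.val < K := b.isLt
      have hab : a.val = b.val := by
        rcases Nat.lt_or_ge (a.val + 1) K with h1 | h1
        · rcases Nat.lt_or_ge (b.val + 1) K with h2 | h2
          · rw [Nat.mod_eq_of_lt h1, Nat.mod_eq_of_lt h2] at hmod; omega
          · have hb1 : b.val + 1 = K := by omega
            rw [Nat.mod_eq_of_lt h1, hb1, Nat.mod_self] at hmod; omega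
        · have ha1 : a.val + 1 = K := by omega
          rcases Nat.lt_or_ge (b.val + 1) K with h2 | h2
          · rw [Nat.mod_eq_of_lt h2, ha1, Nat.mod_self] at hmod; omega
          · omega
      have hts : nuenc K t = nuenc K s := by
        have : K * nuenc K t = K * nuenc K s := by omega
        exact Nat.eq_of_mul_eq_mul_left hK this
      have := ih hts
      subst this
      congr 1
      exact Fin.ext hab

lemma nuenc_bound {K : ℕ} (hK : 2 ≤ K) (l : List (Fin K)) :
    nuenc K l + 2 ≤ 2 * K ^ l.length := by
  induction l with
  | nil => simp [nuenc]
  | cons a t ih =>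
    have ha : a.val < K := a.isLt
    have h1 : K * (nuenc K t + 2) ≤ K * (2 * K ^ t.length) :=
      Nat.mul_le_mul_left K ih
    calc nuenc K (a :: t) + 2 = (a.val + 1) + K * nuenc K t + 2 := rfl
      _ ≤ K + K * nuenc K t + 2 := by omega
      _ ≤ K * (nuenc K t + 2) := by nlinarith
      _ ≤ K * (2 * K ^ t.length) := h1
      _ = 2 * K ^ (a :: t).length := by rw [List.length_cons]; ring

lemma nuenc_lt {K : ℕ} (hK : 2 ≤ K) (l : List (Fin K)) {m : ℕ} (hl : l.length ≤ m) :
    nuenc K l < K ^ (m + 1) := by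
  have h1 := nuenc_bound hK l
  have h2 : K ^ l.length ≤ K ^ m := Nat.pow_le_pow_right (by omega) hl
  have h3 : 2 * K ^ m ≤ K * K ^ m := Nat.mul_le_mul_right _ (by omega)
  have h4 : K * K ^ m = K ^ (m + 1) := (pow_succ K m).symm ▸ (Nat.mul_comm _ _)
  omega

/-- Fixed-length base-K representation. -/
def rep (K : ℕ) (hK : 0 < K) : ℕ → ℕ → List (Fin K)
  | 0, _ => []
  | (L+1), m => ⟨m % K, Nat.mod_lt m hK⟩ :: rep K hK L (m / K)

lemma rep_length {K : ℕ} (hK : 0 < K) (L m : ℕ) : (rep K hK L m).length = L := by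
  induction L generalizing m with
  | zero => rfl
  | succ L ih => simp [rep, ih]

lemma rep_inj {K : ℕ} (hK : 0 < K) (L : ℕ) :
    ∀ m1 m2, m1 < K ^ L → m2 < K ^ L → rep K hK L m1 = rep K hK L m2 → m1 = m2 := by
  induction L with
  | zero => intro m1 m2 h1 h2 _; simp at h1 h2; omega
  | succ L ih =>
    intro m1 m2 h1 h2 h
    simp only [rep, List.cons.injEq] at h
    obtain ⟨hhead, htail⟩ := h
    have hmod : m1 % K = m2 % K := congrArg Fin.val hhead
    have hd1 : m1 / K < K ^ L := by
      rw [Nat.div_lt_iff_lt_mul hK]; rw [pow_succ] at h1; exact h1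
    have hd2 : m2 / K < K ^ L := by
      rw [Nat.div_lt_iff_lt_mul hK]; rw [pow_succ] at h2; exact h2
    have hdiv := ih (m1 / K) (m2 / K) hd1 hd2 htail
    have e1 := Nat.mod_add_div m1 K
    have e2 := Nat.mod_add_div m2 K
    rw [hmod, hdiv] at e1
    exact e1.symm.trans e2

end S17
namespace S17

lemma wlen_ge_one {K : ℕ} (u : Word K) : 1 ≤ wlen u := by
  have h : u.1.length ≠ 0 := fun h => u.2 (List.length_eq_zero_iff.mp h)
  have h1 : 1 ≤ u.1.length := Nat.one_le_iff_ne_zero.mpr h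
  rw [wlen]
  exact_mod_cast h1

lemma ov_eq_one {α : Type*} {K : ℕ} (P : Dist α) (φ : α → Word K) {η : ℝ} (hη : η < 1) :
    ovP P φ η = 1 := by
  have h : {x | wlen (φ x) > η} = Set.univ :=
    Set.eq_univ_of_forall (fun x => lt_of_lt_of_le hη (wlen_ge_one _))
  rw [ovP, h, P.pr_univ]

lemma one_le_of_ov_lt_one {α : Type*} {K : ℕ} (P : Dist α) (φ : α → Word K) {η : ℝ}
    (h : ovP P φ η < 1) : 1 ≤ η := by
  by_contra hc
  rw [ov_eq_one P φ (lt_of_not_ge hc)] at h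
  exact lt_irrefl 1 h

lemma oneltK {K : ℕ} (hK : 2 ≤ K) : (1:ℝ) < (K:ℝ) := by
  have : (2:ℝ) ≤ (K:ℝ) := by exact_mod_cast hK
  linarith

lemma conv {α : Type*} {K : ℕ} (hK : 2 ≤ K) (P : Dist α) (φ : α → Word K) (ψ : Word K → α)
    {η c : ℝ} (hη : 0 ≤ η) (hc : 0 < c) :
    P.pr {x | P.p x < c} ≤ errP P φ ψ + (ovP P φ η + (K:ℝ) ^ (η + 1) * c) := by
  classical
  set D : Set α := {x | ψ (φ x) = x ∧ wlen (φ x) ≤ η} with hD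
  have hcover : {x | P.p x < c} ⊆
      {x | ψ (φ x) ≠ x} ∪ ({x | wlen (φ x) > η} ∪ (D ∩ {x | P.p x < c})) := by
    intro x hx
    by_cases h1 : ψ (φ x) = x
    · by_cases h2 : wlen (φ x) ≤ η
      · exact Or.inr (Or.inr ⟨⟨h1, h2⟩, hx⟩)
      · exact Or.inr (Or.inl (lt_of_not_ge h2))
    · exact Or.inl h1
  have hbound : P.pr (D ∩ {x | P.p x < c}) ≤ (K:ℝ) ^ (η + 1) * c := by
    have hmain : P.pr (D ∩ {x | P.p x < c}) ≤ ((K ^ (⌊η⌋₊ + 1) : ℕ) : ℝ) * c := by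
      refine P.pr_le_card_mul (f := fun x => nuenc K (φ x).1) ?_ ?_
        (fun x hx => le_of_lt hx.2) (le_of_lt hc)
      · intro x hx y hy hxy
        have hφ : φ x = φ y := Subtype.ext (nuenc_inj (by omega) hxy)
        calc x = ψ (φ x) := hx.1.1.symm
          _ = ψ (φ y) := by rw [hφ]
          _ = y := hy.1.1
      · intro x hx
        have hlen : (φ x).1.length ≤ ⌊η⌋₊ := Nat.le_floor (by exact_mod_cast hx.1.2)
        exact nuenc_lt hK _ hlen
    refine le_trans hmain (mul_le_mul_of_nonneg_right ?_ (le_of_lt hc))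
    have h1 : ((K ^ (⌊η⌋₊ + 1) : ℕ) : ℝ) = (K:ℝ) ^ (((⌊η⌋₊ + 1 : ℕ) : ℝ)) := by
      rw [Real.rpow_natCast]; push_cast; ring
    rw [h1]
    refine Real.rpow_le_rpow_of_exponent_le (le_of_lt (oneltK hK)) ?_
    push_cast
    have := Nat.floor_le hη
    linarith
  simp only [errP, ovP]
  exact le_trans (P.pr_mono hcover) (le_trans (P.pr_union_le _ _)
    (add_le_add le_rfl (le_trans (P.pr_union_le _ _) (add_le_add le_rfl hbound))))

lemma convf {α : Type*} (P : Dist α) {M : ℕ} (φ : α → Fin M) (ψ : Fin M → α)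
    {c : ℝ} (hc : 0 < c) :
    P.pr {x | P.p x < c} ≤ P.pr {x | ψ (φ x) ≠ x} + (M:ℝ) * c := by
  classical
  have hcover : {x | P.p x < c} ⊆
      {x | ψ (φ x) ≠ x} ∪ ({x | ψ (φ x) = x} ∩ {x | P.p x < c}) := by
    intro x hx
    by_cases h1 : ψ (φ x) = x
    · exact Or.inr ⟨h1, hx⟩
    · exact Or.inl h1
  have hbound : P.pr ({x | ψ (φ x) = x} ∩ {x | P.p x < c}) ≤ (M:ℝ) * c := by
    refine P.pr_le_card_mul (f := fun x => (φ x).val) ?_ (fun x _ => (φ x).isLt)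
      (fun x hx => le_of_lt hx.2) (le_of_lt hc)
    intro x hx y hy hxy
    have hφ : φ x = φ y := Fin.ext hxy
    calc x = ψ (φ x) := hx.1.symm
      _ = ψ (φ y) := by rw [hφ]
      _ = y := hy.1
  exact le_trans (P.pr_mono hcover)
    (le_trans (P.pr_union_le _ _) (add_le_add le_rfl hbound))

lemma spec_subset {α : Type*} {K : ℕ} (hK : 2 ≤ K) (P : Dist α) {n : ℕ} (hn : 1 ≤ n) (t : ℝ) :
    {x : α | Real.logb (K:ℝ) (1 / P.p x) / (n:ℝ) > t} ⊆
      {x | P.p x < (K:ℝ) ^ (-((n:ℝ) * t))} := by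
  intro x hx
  simp only [Set.mem_setOf_eq] at hx ⊢
  have hKR : (1:ℝ) < (K:ℝ) := oneltK hK
  have hn' : (0:ℝ) < (n:ℝ) := by exact_mod_cast hn
  have ht : (n:ℝ) * t < Real.logb (K:ℝ) (1 / P.p x) := by
    rw [gt_iff_lt, lt_div_iff₀ hn'] at hx
    linarith
  rcases lt_or_ge 0 (P.p x) with hp | hp
  · have h1 : 0 < 1 / P.p x := by positivity
    have h2 : (K:ℝ) ^ ((n:ℝ) * t) < 1 / P.p x := (Real.lt_logb_iff_rpow_lt hKR h1).mp ht
    have h3 : 0 < (K:ℝ) ^ ((n:ℝ) * t) := Real.rpow_pos_of_pos (by linarith) _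
    have h4 : (K:ℝ) ^ ((n:ℝ) * t) * P.p x < 1 := by
      rw [lt_div_iff₀ hp] at h2; exact h2
    rw [Real.rpow_neg (by linarith), ← one_div, lt_div_iff₀ h3]
    linarith [h4]
  · have hp0 : P.p x = 0 := le_antisymm hp (P.nonneg x)
    rw [hp0]
    positivity
lemma subset_spec {α : Type*} {K : ℕ} (hK : 2 ≤ K) (P : Dist α) {n : ℕ} (hn : 1 ≤ n) (t : ℝ) :
    {x : α | P.p x < (K:ℝ) ^ (-((n:ℝ) * t))} ⊆
      {x | Real.logb (K:ℝ) (1 / P.p x) / (n:ℝ) > t} ∪ {x | P.p x = 0} := by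
  intro x hx
  rcases eq_or_lt_of_le (P.nonneg x) with hp | hp
  · exact Or.inr hp.symm
  · left
    simp only [Set.mem_setOf_eq] at hx ⊢
    have hKR : (1:ℝ) < (K:ℝ) := oneltK hK
    have h3 : 0 < (K:ℝ) ^ ((n:ℝ) * t) := Real.rpow_pos_of_pos (by linarith) _
    have h1 : (K:ℝ) ^ ((n:ℝ) * t) < 1 / P.p x := by
      rw [Real.rpow_neg (by linarith : (0:ℝ) ≤ (K:ℝ)), ← one_div] at hx
      rw [lt_div_iff₀ hp]
      calc (K:ℝ) ^ ((n:ℝ) * t) * P.p x < (K:ℝ) ^ ((n:ℝ) * t) * (1 / (K:ℝ) ^ ((n:ℝ) * t)) :=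
            mul_lt_mul_of_pos_left hx h3
        _ = 1 := by field_simp
    have h2 : (n:ℝ) * t < Real.logb (K:ℝ) (1 / P.p x) :=
      (Real.lt_logb_iff_rpow_lt hKR (by positivity)).mpr h1
    rw [gt_iff_lt, lt_div_iff₀ (by exact_mod_cast hn : (0:ℝ) < (n:ℝ))]
    linarith

lemma pr_lt_le_pr_spec {α : Type*} {K : ℕ} (hK : 2 ≤ K) (P : Dist α) {n : ℕ} (hn : 1 ≤ n)
    (t : ℝ) :
    P.pr {x | P.p x < (K:ℝ) ^ (-((n:ℝ) * t))} ≤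
      P.pr {x | Real.logb (K:ℝ) (1 / P.p x) / (n:ℝ) > t} := by
  have h := P.pr_mono (subset_spec hK P hn t)
  have h2 := P.pr_union_le {x | Real.logb (K:ℝ) (1 / P.p x) / (n:ℝ) > t} {x | P.p x = 0}
  have h3 := P.pr_zeroset
  linarith

end S17
namespace S17

lemma card_le_rpow {α : Type*} {K : ℕ} (hK : 2 ≤ K) (P : Dist α) {θ : ℝ} (hθ : 0 ≤ θ)
    [Fintype ↥{x | (K:ℝ) ^ (-θ) ≤ P.p x}]
    (hA : {x | (K:ℝ) ^ (-θ) ≤ P.p x}.Finite) :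
    (Fintype.card ↥{x | (K:ℝ) ^ (-θ) ≤ P.p x} : ℝ) ≤ (K:ℝ) ^ θ := by
  have hKpos : (0:ℝ) < (K:ℝ) := by have := oneltK hK; linarith
  have hc : (0:ℝ) < (K:ℝ) ^ (-θ) := Real.rpow_pos_of_pos hKpos _
  have h1 := P.card_mul_le_one hc
  rw [(P.finite_ge hc).card_toFinset] at h1
  have h2 : (K:ℝ) ^ (-θ) = ((K:ℝ) ^ θ)⁻¹ := Real.rpow_neg (le_of_lt hKpos) θ
  have h3 : (0:ℝ) < (K:ℝ) ^ θ := Real.rpow_pos_of_pos hKpos _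
  have h4 : (Fintype.card ↥{x | (K:ℝ) ^ (-θ) ≤ P.p x} : ℝ) * ((K:ℝ) ^ θ)⁻¹ ≤ 1 := by
    rw [← h2]
    convert h1 using 3
  calc (Fintype.card ↥{x | (K:ℝ) ^ (-θ) ≤ P.p x} : ℝ)
      = (Fintype.card ↥{x | (K:ℝ) ^ (-θ) ≤ P.p x} : ℝ) * ((K:ℝ) ^ θ)⁻¹ * (K:ℝ) ^ θ := by
        field_simp
    _ ≤ 1 * (K:ℝ) ^ θ := mul_le_mul_of_nonneg_right h4 (le_of_lt h3)
    _ = (K:ℝ) ^ θ := one_mul _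

lemma dirf {α : Type*} {K : ℕ} (hK : 2 ≤ K) (P : Dist α) {θ : ℝ} (hθ : 0 ≤ θ) :
    ∃ (M : ℕ) (φ : α → Fin M) (ψ : Fin M → α), 0 < M ∧ ((M : ℝ) ≤ (K:ℝ) ^ θ + 1) ∧
      P.pr {x | ψ (φ x) ≠ x} ≤ P.pr {x | P.p x < (K:ℝ) ^ (-θ)} := by
  classical
  have hKpos : (0:ℝ) < (K:ℝ) := by have := oneltK hK; linarith
  have hc : (0:ℝ) < (K:ℝ) ^ (-θ) := Real.rpow_pos_of_pos hKpos _
  have hA : {x | (K:ℝ) ^ (-θ) ≤ P.p x}.Finite := P.finite_ge hc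
  haveI : Fintype ↥{x | (K:ℝ) ^ (-θ) ≤ P.p x} := hA.fintype
  set m := Fintype.card ↥{x | (K:ℝ) ^ (-θ) ≤ P.p x} with hm
  let e : ↥{x | (K:ℝ) ^ (-θ) ≤ P.p x} ≃ Fin m := Fintype.equivFin _
  have hne : Nonempty α := P.nonempty
  refine ⟨m + 1,
    fun x => if h : (K:ℝ) ^ (-θ) ≤ P.p x then (e ⟨x, h⟩).succ else 0,
    fun i => Fin.cases hne.some (fun j => (e.symm j).1) i,
    Nat.succ_pos _, ?_, ?_⟩
  · have := card_le_rpow hK P hθ hA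
    push_cast
    linarith
  · refine P.pr_mono (fun x hx => ?_)
    simp only [Set.mem_setOf_eq] at hx ⊢
    by_contra hge
    push_neg at hge
    apply hx
    rw [dif_pos hge, Fin.cases_succ, Equiv.symm_apply_apply]

lemma dirv {α : Type*} {K : ℕ} [Countable α] (hK : 2 ≤ K) (P : Dist α) {θ ε : ℝ}
    (hθ : 0 ≤ θ) (hε : 0 ≤ ε) :
    ∃ (φ : α → Word K) (ψ : Word K → α),
      errP P φ ψ ≤ ε ∧
      ∀ η : ℝ, θ + 4 ≤ η →
        ovP P φ η ≤ max (P.pr {x | P.p x < (K:ℝ) ^ (-θ)} - ε) 0 + (K:ℝ) ^ (-θ) := by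
  classical
  have hK0 : 0 < K := by omega
  have hKpos : (0:ℝ) < (K:ℝ) := by have := oneltK hK; linarith
  set c : ℝ := (K:ℝ) ^ (-θ) with hcdef
  have hc : (0:ℝ) < c := Real.rpow_pos_of_pos hKpos _
  set A : Set α := {x | c ≤ P.p x} with hAdef
  set B : Set α := {x | P.p x < c} with hBdef
  have hA : A.Finite := P.finite_ge hc
  haveI : Fintype ↥A := hA.fintype
  set m := Fintype.card ↥A with hm
  let e : ↥A ≃ Fin m := Fintype.equivFin _
  obtain ⟨idx, hidx⟩ := exists_injective_nat α
  have hne : Nonempty α := P.nonempty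
  set LL : ℕ := ⌊θ⌋₊ + 1 with hLL
  have hmLL : m < K ^ LL := by
    have h1 : (m:ℝ) ≤ (K:ℝ) ^ θ := card_le_rpow hK P hθ hA
    have h2 : (K:ℝ) ^ θ < (K:ℝ) ^ ((LL:ℕ):ℝ) := by
      apply Real.rpow_lt_rpow_of_exponent_lt (oneltK hK)
      push_cast
      have := Nat.lt_floor_add_one θ
      linarith [show ((LL:ℕ):ℝ) = (⌊θ⌋₊:ℝ) + 1 by rw [hLL]; push_cast; ring]
    rw [Real.rpow_natCast] at h2
    have h3 : (m:ℝ) < ((K ^ LL : ℕ) : ℝ) := by push_cast; linarith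
    exact_mod_cast h3
  set z0 : Fin K := ⟨0, hK0⟩ with hz0
  set z1 : Fin K := ⟨1, by omega⟩ with hz1
  set E : Set α := {x | x ∈ B ∧ P.pr {y | y ∈ B ∧ idx y ≤ idx x} ≤ ε} with hEdef
  set φ : α → Word K := fun x =>
    if h : c ≤ P.p x then ⟨z0 :: rep K hK0 LL (e ⟨x, h⟩).val, by simp⟩
    else if x ∈ E then ⟨[z0], by simp⟩
    else ⟨z1 :: List.replicate (idx x) z0, by simp⟩ with hφdef
  have hEB : E ⊆ B := fun x hx => hx.1
  have hz01 : z0 ≠ z1 := by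
    intro h
    have := congrArg Fin.val h
    simp [hz0, hz1] at this
  -- φ is injective outside E
  have hinj : ∀ x, x ∉ E → ∀ y, y ∉ E → φ x = φ y → x = y := by
    intro x hxE y hyE hxy
    by_cases hx : c ≤ P.p x <;> by_cases hy : c ≤ P.p y
    · rw [hφdef] at hxy
      simp only [dif_pos hx, dif_pos hy] at hxy
      have h1 := congrArg Subtype.val hxy
      simp only [List.cons.injEq] at h1
      have h2 := rep_inj hK0 LL _ _ (lt_of_lt_of_le (e ⟨x, hx⟩).isLt (le_of_eq (by rfl)) |>.trans_le (le_refl _) |> fun _ => (e ⟨x, hx⟩).isLt.trans_le hmLL.le) ((e ⟨y, hy⟩).isLt.trans_le hmLL.le) h1.2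
      have h3 : e ⟨x, hx⟩ = e ⟨y, hy⟩ := Fin.ext h2
      have h4 := e.injective h3
      exact congrArg Subtype.val h4
    · exfalso
      rw [hφdef] at hxy
      simp only [dif_pos hx, dif_neg hy, if_neg (fun h => hyE h)] at hxy
      have h1 := congrArg Subtype.val hxy
      simp only [List.cons.injEq] at h1
      exact hz01 h1.1
    · exfalso
      rw [hφdef] at hxy
      simp only [dif_neg hx, dif_pos hy, if_neg (fun h => hxE h)] at hxy
      have h1 := congrArg Subtype.val hxy
      simp only [List.cons.injEq] at h1
      exact hz01 h1.1.symm
    · rw [hφdef] at hxy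
      simp only [dif_neg hx, dif_neg hy, if_neg (fun h => hxE h), if_neg (fun h => hyE h)] at hxy
      have h1 := congrArg Subtype.val hxy
      simp only [List.cons.injEq] at h1
      have h2 := congrArg List.length h1.2
      simp only [List.length_replicate] at h2
      exact hidx h2
  set ψ : Word K → α := fun w =>
    if h : ∃ x, x ∉ E ∧ φ x = w then h.choose else hne.some with hψdef
  have hcorrect : ∀ x, x ∉ E → ψ (φ x) = x := by
    intro x hx
    have hex : ∃ y, y ∉ E ∧ φ y = φ x := ⟨x, hx, rfl⟩
    rw [hψdef]
    simp only [dif_pos hex]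
    exact hinj _ hex.choose_spec.1 _ hx hex.choose_spec.2
  have herr : errP P φ ψ ≤ P.pr E := by
    refine P.pr_mono (fun x hx => ?_)
    by_contra hxE
    exact hx (hcorrect x hxE)
  have hprE : P.pr E ≤ ε := by
    rw [P.pr_eq]
    refine (P.summable_ind E).tsum_le_of_sum_le (fun s => ?_)
    by_cases hs : (s.filter (fun x => x ∈ E)).Nonempty
    · obtain ⟨x0, hx0mem, hx0max⟩ := Finset.exists_max_image _ idx hs
      have hx0E : x0 ∈ E := (Finset.mem_filter.mp hx0mem).2
      have hsub : ∀ x ∈ s, E.indicator P.p x ≤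
          {y | y ∈ B ∧ idx y ≤ idx x0}.indicator P.p x := by
        intro x hxs
        by_cases hxE : x ∈ E
        · have hmem : x ∈ {y | y ∈ B ∧ idx y ≤ idx x0} :=
            ⟨hxE.1, hx0max x (Finset.mem_filter.mpr ⟨hxs, hxE⟩)⟩
          rw [Set.indicator_of_mem hxE, Set.indicator_of_mem hmem]
        · rw [Set.indicator_of_notMem hxE]
          exact P.ind_nonneg _ x
      calc ∑ x ∈ s, E.indicator P.p x
          ≤ ∑ x ∈ s, {y | y ∈ B ∧ idx y ≤ idx x0}.indicator P.p x := Finset.sum_le_sum hsub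
        _ ≤ P.pr {y | y ∈ B ∧ idx y ≤ idx x0} := by
            rw [P.pr_eq]
            exact (P.summable_ind _).sum_le_tsum s (fun i _ => P.ind_nonneg _ i)
        _ ≤ ε := hx0E.2
    · have hz : ∀ x ∈ s, E.indicator P.p x = 0 := by
        intro x hxs
        have hxE : x ∉ E := fun h => hs ⟨x, Finset.mem_filter.mpr ⟨hxs, h⟩⟩
        exact Set.indicator_of_notMem hxE _
      rw [Finset.sum_eq_zero hz]
      exact hε
  have hsplit := P.pr_diff hEB
  have hO : P.pr (B \ E) ≤ max (P.pr B - ε) 0 + c := by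
    by_cases hOe : (B \ E) = ∅
    · rw [hOe, P.pr_empty]
      have h0 : (0:ℝ) ≤ max (P.pr B - ε) 0 := le_max_right _ _
      linarith
    · obtain ⟨x1, hx1⟩ := Set.nonempty_iff_ne_empty.mpr hOe
      obtain ⟨x0, hx0O, hx0idx⟩ : ∃ x0 ∈ B \ E, ∀ y ∈ B \ E, idx x0 ≤ idx y := by
        have hSne : (idx '' (B \ E)).Nonempty := ⟨idx x1, ⟨x1, hx1, rfl⟩⟩
        obtain ⟨x0, hx0, hfx0⟩ := Nat.sInf_mem hSne
        exact ⟨x0, hx0, fun y hy => hfx0 ▸ Nat.sInf_le ⟨y, hy, rfl⟩⟩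
      have hgt : ε < P.pr {y | y ∈ B ∧ idx y ≤ idx x0} := by
        by_contra hle
        exact hx0O.2 ⟨hx0O.1, le_of_not_gt hle⟩
      have hsub2 : {y | y ∈ B ∧ idx y ≤ idx x0} ⊆ E ∪ {x0} := by
        intro y hy
        rcases eq_or_lt_of_le hy.2 with heq | hlt
        · right
          exact hidx heq
        · left
          by_contra hyE
          exact absurd (hx0idx y ⟨hy.1, hyE⟩) (not_le.mpr hlt)
      have h5 : P.pr {y | y ∈ B ∧ idx y ≤ idx x0} ≤ P.pr E + P.p x0 := by
        refine le_trans (P.pr_mono hsub2) (le_trans (P.pr_union_le _ _) ?_)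
        rw [P.pr_singleton]
      have h6 : P.p x0 < c := hx0O.1
      have h7 := le_max_left (P.pr B - ε) 0
      linarith
  refine ⟨φ, ψ, le_trans herr hprE, fun η hη => ?_⟩
  have hov : {x | wlen (φ x) > η} ⊆ B \ E := by
    intro x hx
    simp only [Set.mem_setOf_eq] at hx
    by_cases h1 : c ≤ P.p x
    · exfalso
      have hw : wlen (φ x) = (LL : ℝ) + 1 := by
        rw [hφdef]
        simp only [dif_pos h1, wlen, List.length_cons, rep_length]
        push_cast
        ring
      rw [hw] at hx
      have hfl : (⌊θ⌋₊ : ℝ) ≤ θ := Nat.floor_le hθ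
      have : (LL:ℝ) + 1 ≤ θ + 4 := by
        rw [hLL]
        push_cast
        linarith
      linarith
    · by_cases h2 : x ∈ E
      · exfalso
        have hw : wlen (φ x) = 1 := by
          rw [hφdef]
          simp only [dif_neg h1, if_pos h2, wlen, List.length_singleton]
          norm_num
        rw [hw] at hx
        linarith
      · exact ⟨lt_of_not_ge h1, h2⟩
  calc ovP P φ η ≤ P.pr (B \ E) := P.pr_mono hov
    _ ≤ max (P.pr B - ε) 0 + c := hO

end S17
namespace S17

lemma rpow_tendsto_zero {K : ℕ} (hK : 2 ≤ K) {u : ℕ → ℝ} (hu : Tendsto u atTop atBot) :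
    Tendsto (fun n => (K:ℝ) ^ (u n)) atTop (nhds 0) := by
  have hKpos : (0:ℝ) < (K:ℝ) := by have := oneltK hK; linarith
  have heq : (fun n => (K:ℝ) ^ (u n)) = fun n => Real.exp (Real.log (K:ℝ) * u n) := by
    funext n
    rw [Real.rpow_def_of_pos hKpos]
  rw [heq]
  exact Real.tendsto_exp_atBot.comp (hu.const_mul_atBot (Real.log_pos (oneltK hK)))

lemma prBdd {𝒳 : Type*} (X : Source 𝒳) (S : ∀ n, Set (Fin n → 𝒳)) :
    IsBoundedUnder (fun a b : ℝ => a ≥ b) atTop (fun n => (X n).pr (S n)) :=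
  Filter.isBoundedUnder_of ⟨0, fun n => (X n).pr_nonneg _⟩

lemma genConvVL {𝒳 : Type*} {K : ℕ} (hK : 2 ≤ K) (X : Source 𝒳)
    {ε δ : ℝ} (hε0 : 0 ≤ ε) (hδ0 : 0 ≤ δ) (hεδ : ε + δ < 1)
    (t t' : ℕ → ℝ)
    (hgap : Tendsto (fun n : ℕ => (n:ℝ) * t' n - (n:ℝ) * t n) atTop atTop)
    (φ : ∀ n, (Fin n → 𝒳) → Word K) (ψ : ∀ n, Word K → (Fin n → 𝒳))
    (hach : ∀ γ > (0:ℝ), ∃ ns : ℕ → ℕ, StrictMono ns ∧ ∀ i,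
      errP (X (ns i)) (φ (ns i)) (ψ (ns i)) ≤ ε + γ ∧
      ovP (X (ns i)) (φ (ns i)) ((ns i : ℝ) * t (ns i)) ≤ δ + γ) :
    liminf (fun n => (X n).pr
      {x | Real.logb (K:ℝ) (1 / (X n).p x) / (n:ℝ) > t' n}) atTop ≤ ε + δ := by
  have hKpos : (0:ℝ) < (K:ℝ) := by have := oneltK hK; linarith
  refine le_of_forall_pos_le_add (fun γ' hγ' => ?_)
  set γ := min (γ'/3) ((1 - ε - δ)/2) with hγdef
  have hγpos : 0 < γ := lt_min (by linarith) (by linarith)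
  have hγle : γ ≤ γ'/3 := min_le_left _ _
  have hδγ1 : δ + γ < 1 := by
    have h1 : γ ≤ (1 - ε - δ)/2 := min_le_right _ _
    linarith
  obtain ⟨ns, hmono, hns⟩ := hach γ hγpos
  have hterm : Tendsto (fun n : ℕ => (K:ℝ) ^ ((n:ℝ) * t n + 1 + -((n:ℝ) * t' n))) atTop (nhds 0) := by
    refine rpow_tendsto_zero hK ?_
    have h2 : Tendsto (fun n : ℕ => -((n:ℝ) * t' n - (n:ℝ) * t n)) atTop atBot :=
      tendsto_neg_atTop_atBot.comp hgap
    have h3 := tendsto_atBot_add_const_right atTop 1 h2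
    refine h3.congr (fun n => by ring)
  have hev : ∀ᶠ n : ℕ in atTop, (K:ℝ) ^ ((n:ℝ) * t n + 1 + -((n:ℝ) * t' n)) < γ'/3 :=
    hterm.eventually_lt_const (by linarith)
  obtain ⟨N1, hN1⟩ := eventually_atTop.mp hev
  refine le_trans (liminf_le_of_frequently_le ?_ (prBdd X _)) (by linarith : ε + δ + γ'/3 + γ'/3 + γ'/3 ≤ ε + δ + γ')
  rw [frequently_atTop]
  intro N
  set i := max N (max N1 1) with hidef
  set n := ns i with hndef
  have hin : i ≤ n := hmono.le_apply
  have hnN : N ≤ n := le_trans (le_max_left _ _) hin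
  have hnN1 : N1 ≤ n := le_trans (le_trans (le_max_left _ _) (le_max_right _ _)) hin
  have hn1 : 1 ≤ n := le_trans (le_trans (le_max_right _ _) (le_max_right _ _)) hin
  refine ⟨n, hnN, ?_⟩
  obtain ⟨herr, hov⟩ := hns i
  have hη : 1 ≤ (n:ℝ) * t n :=
    one_le_of_ov_lt_one _ _ (lt_of_le_of_lt hov hδγ1)
  have hc : (0:ℝ) < (K:ℝ) ^ (-((n:ℝ) * t' n)) := Real.rpow_pos_of_pos hKpos _
  have hconv := conv hK (X n) (φ n) (ψ n) (η := (n:ℝ) * t n)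
    (c := (K:ℝ) ^ (-((n:ℝ) * t' n))) (by linarith) hc
  have hmono2 : (X n).pr {x | Real.logb (K:ℝ) (1 / (X n).p x) / (n:ℝ) > t' n} ≤
      (X n).pr {x | (X n).p x < (K:ℝ) ^ (-((n:ℝ) * t' n))} :=
    (X n).pr_mono (spec_subset hK (X n) hn1 (t' n))
  have hprod : (K:ℝ) ^ ((n:ℝ) * t n + 1) * (K:ℝ) ^ (-((n:ℝ) * t' n)) =
      (K:ℝ) ^ ((n:ℝ) * t n + 1 + -((n:ℝ) * t' n)) := (Real.rpow_add hKpos _ _).symm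
  have hterm2 := hN1 n hnN1
  calc (X n).pr {x | Real.logb (K:ℝ) (1 / (X n).p x) / (n:ℝ) > t' n}
      ≤ (X n).pr {x | (X n).p x < (K:ℝ) ^ (-((n:ℝ) * t' n))} := hmono2
    _ ≤ errP (X n) (φ n) (ψ n) + (ovP (X n) (φ n) ((n:ℝ) * t n) +
        (K:ℝ) ^ ((n:ℝ) * t n + 1) * (K:ℝ) ^ (-((n:ℝ) * t' n))) := hconv
    _ ≤ (ε + γ) + ((δ + γ) + γ'/3) := by
        rw [hprod]
        exact add_le_add herr (add_le_add hov (le_of_lt hterm2))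
    _ ≤ ε + δ + γ'/3 + γ'/3 + γ'/3 := by linarith

lemma genConvFL {𝒳 : Type*} {K : ℕ} (hK : 2 ≤ K) (X : Source 𝒳)
    {ε' : ℝ} (hε'0 : 0 ≤ ε')
    (r t' : ℕ → ℝ)
    (hgap : Tendsto (fun n : ℕ => (n:ℝ) * t' n - (n:ℝ) * r n) atTop atTop)
    {M : ℕ → ℕ} (hM : ∀ n, 0 < M n)
    (φ : ∀ n, (Fin n → 𝒳) → Fin (M n)) (ψ : ∀ n, Fin (M n) → (Fin n → 𝒳))
    (hach : ∀ γ > (0:ℝ), ∃ ns : ℕ → ℕ, StrictMono ns ∧ ∀ i, 1 ≤ ns i ∧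
      (X (ns i)).pr {x | ψ (ns i) (φ (ns i) x) ≠ x} ≤ ε' + γ ∧
      Real.logb (K:ℝ) (M (ns i) : ℝ) ≤ (ns i : ℝ) * r (ns i)) :
    liminf (fun n => (X n).pr
      {x | Real.logb (K:ℝ) (1 / (X n).p x) / (n:ℝ) > t' n}) atTop ≤ ε' := by
  have hKpos : (0:ℝ) < (K:ℝ) := by have := oneltK hK; linarith
  refine le_of_forall_pos_le_add (fun γ' hγ' => ?_)
  obtain ⟨ns, hmono, hns⟩ := hach (γ'/2) (by linarith)
  have hterm : Tendsto (fun n : ℕ => (K:ℝ) ^ ((n:ℝ) * r n + -((n:ℝ) * t' n))) atTop (nhds 0) := by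
    refine rpow_tendsto_zero hK ?_
    have h2 : Tendsto (fun n : ℕ => -((n:ℝ) * t' n - (n:ℝ) * r n)) atTop atBot :=
      tendsto_neg_atTop_atBot.comp hgap
    refine h2.congr (fun n => by ring)
  have hev : ∀ᶠ n : ℕ in atTop, (K:ℝ) ^ ((n:ℝ) * r n + -((n:ℝ) * t' n)) < γ'/2 :=
    hterm.eventually_lt_const (by linarith)
  obtain ⟨N1, hN1⟩ := eventually_atTop.mp hev
  refine le_trans (liminf_le_of_frequently_le ?_ (prBdd X _))
    (by linarith : ε' + γ'/2 + γ'/2 ≤ ε' + γ')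
  rw [frequently_atTop]
  intro N
  set i := max N N1 with hidef
  set n := ns i with hndef
  have hin : i ≤ n := hmono.le_apply
  have hnN : N ≤ n := le_trans (le_max_left _ _) hin
  have hnN1 : N1 ≤ n := le_trans (le_max_right _ _) hin
  refine ⟨n, hnN, ?_⟩
  obtain ⟨hn1, herr, hrate⟩ := hns i
  have hMpos : (0:ℝ) < (M n : ℝ) := by exact_mod_cast hM n
  have hMle : (M n : ℝ) ≤ (K:ℝ) ^ ((n:ℝ) * r n) :=
    (Real.logb_le_iff_le_rpow (oneltK hK) hMpos).mp hrate
  have hc : (0:ℝ) < (K:ℝ) ^ (-((n:ℝ) * t' n)) := Real.rpow_pos_of_pos hKpos _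
  have hconv := convf (X n) (φ n) (ψ n) (c := (K:ℝ) ^ (-((n:ℝ) * t' n))) hc
  have hmono2 : (X n).pr {x | Real.logb (K:ℝ) (1 / (X n).p x) / (n:ℝ) > t' n} ≤
      (X n).pr {x | (X n).p x < (K:ℝ) ^ (-((n:ℝ) * t' n))} :=
    (X n).pr_mono (spec_subset hK (X n) hn1 (t' n))
  have hprod : (K:ℝ) ^ ((n:ℝ) * r n) * (K:ℝ) ^ (-((n:ℝ) * t' n)) =
      (K:ℝ) ^ ((n:ℝ) * r n + -((n:ℝ) * t' n)) := (Real.rpow_add hKpos _ _).symm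
  have hterm2 := hN1 n hnN1
  calc (X n).pr {x | Real.logb (K:ℝ) (1 / (X n).p x) / (n:ℝ) > t' n}
      ≤ (X n).pr {x | (X n).p x < (K:ℝ) ^ (-((n:ℝ) * t' n))} := hmono2
    _ ≤ (X n).pr {x | ψ n (φ n x) ≠ x} + (M n : ℝ) * (K:ℝ) ^ (-((n:ℝ) * t' n)) := hconv
    _ ≤ (ε' + γ'/2) + γ'/2 := by
        refine add_le_add herr ?_
        have h5 : (M n : ℝ) * (K:ℝ) ^ (-((n:ℝ) * t' n)) ≤
            (K:ℝ) ^ ((n:ℝ) * r n) * (K:ℝ) ^ (-((n:ℝ) * t' n)) :=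
          mul_le_mul_of_nonneg_right hMle (le_of_lt hc)
        rw [hprod] at h5
        linarith
    _ ≤ ε' + γ'/2 + γ'/2 := by linarith

end S17
namespace S17

lemma genDirVL {𝒳 : Type*} [Countable 𝒳] {K : ℕ} (hK : 2 ≤ K) (X : Source 𝒳) {ε δ : ℝ}
    (hε0 : 0 ≤ ε) (hδ0 : 0 ≤ δ)
    (t t' : ℕ → ℝ)
    (hθinf : Tendsto (fun n : ℕ => (n:ℝ) * t n) atTop atTop)
    (hgap : Tendsto (fun n : ℕ => (n:ℝ) * t' n - (n:ℝ) * t n) atTop atTop)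
    (hlim : liminf (fun n => (X n).pr
      {x | Real.logb (K:ℝ) (1 / (X n).p x) / (n:ℝ) > t n}) atTop ≤ ε + δ) :
    ∃ (φ : ∀ n, (Fin n → 𝒳) → Word K) (ψ : ∀ n, Word K → (Fin n → 𝒳)),
      ∀ γ > (0:ℝ), ∃ ns : ℕ → ℕ, StrictMono ns ∧ ∀ i, 1 ≤ ns i ∧
        errP (X (ns i)) (φ (ns i)) (ψ (ns i)) ≤ ε + γ ∧
        ovP (X (ns i)) (φ (ns i)) ((ns i : ℝ) * t' (ns i)) ≤ δ + γ := by
  classical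
  have hcode := fun n => dirv hK (X n) (θ := max ((n:ℝ) * t n) 0) (ε := ε)
    (le_max_right _ _) hε0
  choose φ ψ herr hov using hcode
  refine ⟨φ, ψ, fun γ hγ => ?_⟩
  have hcob : IsCoboundedUnder (· ≥ ·) atTop (fun n => (X n).pr
      {x | Real.logb (K:ℝ) (1 / (X n).p x) / (n:ℝ) > t n}) :=
    Filter.isCoboundedUnder_ge_of_le atTop (fun n => (X n).pr_le_one _)
  have hfreq : ∃ᶠ n in atTop, (X n).pr
      {x | Real.logb (K:ℝ) (1 / (X n).p x) / (n:ℝ) > t n} < ε + δ + γ/2 :=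
    frequently_lt_of_liminf_lt hcob (lt_of_le_of_lt hlim (by linarith))
  have hev1 : ∀ᶠ n : ℕ in atTop, 1 ≤ n := eventually_ge_atTop 1
  have hev2 : ∀ᶠ n : ℕ in atTop, 0 ≤ (n:ℝ) * t n := hθinf.eventually_ge_atTop 0
  have hev3 : ∀ᶠ n : ℕ in atTop, max ((n:ℝ) * t n) 0 + 4 ≤ (n:ℝ) * t' n := by
    filter_upwards [hev2, hgap.eventually_ge_atTop 4] with n h1 h2
    rw [max_eq_left h1]
    linarith
  have hev4 : ∀ᶠ n : ℕ in atTop, (K:ℝ) ^ (-(max ((n:ℝ) * t n) 0)) ≤ γ/2 := by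
    have htnd : Tendsto (fun n : ℕ => (K:ℝ) ^ (-(max ((n:ℝ) * t n) 0))) atTop (nhds 0) := by
      refine rpow_tendsto_zero hK ?_
      have h1 : Tendsto (fun n : ℕ => max ((n:ℝ) * t n) 0) atTop atTop :=
        tendsto_atTop_mono (fun n => le_max_left _ _) hθinf
      exact tendsto_neg_atTop_atBot.comp h1
    filter_upwards [htnd.eventually_lt_const (by linarith : (0:ℝ) < γ/2)] with n h
    exact le_of_lt h
  obtain ⟨ns, hmono, hns⟩ := extraction_of_frequently_atTop
    (hfreq.and_eventually (hev1.and (hev2.and (hev3.and hev4))))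
  refine ⟨ns, hmono, fun i => ?_⟩
  obtain ⟨hP, h1, h2, h3, h4⟩ := hns i
  refine ⟨h1, le_trans (herr (ns i)) (by linarith), ?_⟩
  have hovb := hov (ns i) ((ns i : ℝ) * t' (ns i)) h3
  have hBspec : (X (ns i)).pr {x | (X (ns i)).p x < (K:ℝ) ^ (-(max ((ns i : ℝ) * t (ns i)) 0))} ≤
      (X (ns i)).pr {x | Real.logb (K:ℝ) (1 / (X (ns i)).p x) / (ns i : ℝ) > t (ns i)} := by
    rw [max_eq_left h2]
    exact pr_lt_le_pr_spec hK (X (ns i)) h1 (t (ns i))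
  have hB : (X (ns i)).pr {x | (X (ns i)).p x < (K:ℝ) ^ (-(max ((ns i : ℝ) * t (ns i)) 0))} - ε
      ≤ δ + γ/2 := by
    have := lt_of_le_of_lt hBspec hP
    linarith
  calc ovP (X (ns i)) (φ (ns i)) ((ns i : ℝ) * t' (ns i))
      ≤ max ((X (ns i)).pr {x | (X (ns i)).p x <
          (K:ℝ) ^ (-(max ((ns i : ℝ) * t (ns i)) 0))} - ε) 0 +
        (K:ℝ) ^ (-(max ((ns i : ℝ) * t (ns i)) 0)) := hovb
    _ ≤ (δ + γ/2) + γ/2 := by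
        refine add_le_add (max_le hB (by linarith)) h4
    _ = δ + γ := by ring

lemma genDirFL {𝒳 : Type*} [Countable 𝒳] {K : ℕ} (hK : 2 ≤ K) (X : Source 𝒳) {g : ℝ}
    (hg0 : 0 ≤ g)
    (t t' : ℕ → ℝ)
    (hθinf : Tendsto (fun n : ℕ => (n:ℝ) * t n) atTop atTop)
    (hgap : Tendsto (fun n : ℕ => (n:ℝ) * t' n - (n:ℝ) * t n) atTop atTop)
    (hlim : liminf (fun n => (X n).pr
      {x | Real.logb (K:ℝ) (1 / (X n).p x) / (n:ℝ) > t n}) atTop ≤ g) :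
    ∃ (M : ℕ → ℕ) (φ : ∀ n, (Fin n → 𝒳) → Fin (M n)) (ψ : ∀ n, Fin (M n) → (Fin n → 𝒳)),
      ∀ γ > (0:ℝ), ∃ ns : ℕ → ℕ, StrictMono ns ∧ ∀ i, 1 ≤ ns i ∧
        (X (ns i)).pr {x | ψ (ns i) (φ (ns i) x) ≠ x} ≤ g + γ ∧
        Real.logb (K:ℝ) (M (ns i) : ℝ) ≤ (ns i : ℝ) * t' (ns i) := by
  classical
  have hKpos : (0:ℝ) < (K:ℝ) := by have := oneltK hK; linarith
  have hcode := fun n => dirf hK (X n) (θ := max ((n:ℝ) * t n) 0) (le_max_right _ _)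
  choose M φ ψ hMpos hMle herr using hcode
  have hlog : ∀ n, Real.logb (K:ℝ) (M n : ℝ) ≤ max ((n:ℝ) * t n) 0 + 1 := by
    intro n
    have h0 : (0:ℝ) < (M n : ℝ) := by exact_mod_cast hMpos n
    have h1 : (1:ℝ) ≤ (K:ℝ) ^ (max ((n:ℝ) * t n) 0) := by
      have := Real.rpow_le_rpow_of_exponent_le (le_of_lt (oneltK hK))
        (le_max_right ((n:ℝ) * t n) 0)
      rwa [Real.rpow_zero] at this
    have h2 : (M n : ℝ) ≤ (K:ℝ) ^ (max ((n:ℝ) * t n) 0 + 1) := by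
      have h3 : (K:ℝ) ^ (max ((n:ℝ) * t n) 0 + 1) =
          (K:ℝ) ^ (max ((n:ℝ) * t n) 0) * (K:ℝ) := by
        rw [Real.rpow_add hKpos, Real.rpow_one]
      have h4 := hMle n
      have h5 : (2:ℝ) ≤ (K:ℝ) := by exact_mod_cast hK
      nlinarith [h1]
    exact (Real.logb_le_iff_le_rpow (oneltK hK) h0).mpr h2
  refine ⟨M, φ, ψ, fun γ hγ => ?_⟩
  have hcob : IsCoboundedUnder (· ≥ ·) atTop (fun n => (X n).pr
      {x | Real.logb (K:ℝ) (1 / (X n).p x) / (n:ℝ) > t n}) :=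
    Filter.isCoboundedUnder_ge_of_le atTop (fun n => (X n).pr_le_one _)
  have hfreq : ∃ᶠ n in atTop, (X n).pr
      {x | Real.logb (K:ℝ) (1 / (X n).p x) / (n:ℝ) > t n} < g + γ :=
    frequently_lt_of_liminf_lt hcob (lt_of_le_of_lt hlim (by linarith))
  have hev1 : ∀ᶠ n : ℕ in atTop, 1 ≤ n := eventually_ge_atTop 1
  have hev2 : ∀ᶠ n : ℕ in atTop, 0 ≤ (n:ℝ) * t n := hθinf.eventually_ge_atTop 0
  have hev3 : ∀ᶠ n : ℕ in atTop, max ((n:ℝ) * t n) 0 + 1 ≤ (n:ℝ) * t' n := by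
    filter_upwards [hev2, hgap.eventually_ge_atTop 1] with n h1 h2
    rw [max_eq_left h1]
    linarith
  obtain ⟨ns, hmono, hns⟩ := extraction_of_frequently_atTop
    (hfreq.and_eventually (hev1.and (hev2.and hev3)))
  refine ⟨ns, hmono, fun i => ?_⟩
  obtain ⟨hP, h1, h2, h3⟩ := hns i
  refine ⟨h1, ?_, le_trans (hlog (ns i)) h3⟩
  have hBspec : (X (ns i)).pr {x | (X (ns i)).p x < (K:ℝ) ^ (-(max ((ns i : ℝ) * t (ns i)) 0))} ≤
      (X (ns i)).pr {x | Real.logb (K:ℝ) (1 / (X (ns i)).p x) / (ns i : ℝ) > t (ns i)} := by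
    rw [max_eq_left h2]
    exact pr_lt_le_pr_spec hK (X (ns i)) h1 (t (ns i))
  have := le_trans (herr (ns i)) hBspec
  linarith [hP]

end S17
namespace S17

lemma sInf_eq_of_forall {S T : Set ℝ}
    (hST : ∀ s ∈ S, ∀ γ > (0:ℝ), s + γ ∈ T)
    (hTS : ∀ t ∈ T, ∀ γ > (0:ℝ), t + γ ∈ S) :
    sInf S = sInf T := by
  by_cases hS : S.Nonempty
  · have hT : T.Nonempty := ⟨hS.choose + 1, hST _ hS.choose_spec 1 one_pos⟩
    by_cases hBS : BddBelow S
    · have hBT : BddBelow T := by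
        obtain ⟨b, hb⟩ := hBS
        exact ⟨b, fun x hx => le_of_forall_pos_le_add (fun γ hγ => hb (hTS x hx γ hγ))⟩
      apply le_antisymm
      · refine le_csInf hT (fun x hx => ?_)
        exact le_of_forall_pos_le_add (fun γ hγ => csInf_le hBS (hTS x hx γ hγ))
      · refine le_csInf hS (fun x hx => ?_)
        exact le_of_forall_pos_le_add (fun γ hγ => csInf_le hBT (hST x hx γ hγ))
    · have hBT : ¬ BddBelow T := by
        rintro ⟨b, hb⟩
        exact hBS ⟨b, fun x hx => le_of_forall_pos_le_add (fun γ hγ => hb (hST x hx γ hγ))⟩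
      rw [Real.sInf_of_not_bddBelow hBS, Real.sInf_of_not_bddBelow hBT]
  · have hT : ¬ T.Nonempty := fun ⟨x, hx⟩ => hS ⟨x + 1, hTS x hx 1 one_pos⟩
    rw [Set.not_nonempty_iff_eq_empty.mp hS, Set.not_nonempty_iff_eq_empty.mp hT]

lemma _root_.NY.Dist.p_le_one {α : Type*} (P : Dist α) (x : α) : P.p x ≤ 1 := by
  rw [← P.pr_singleton x]
  exact P.pr_le_one _

lemma spec_nonneg {α : Type*} {K : ℕ} (hK : 2 ≤ K) (P : Dist α) {n : ℕ} (hn : 1 ≤ n) (x : α) :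
    0 ≤ Real.logb (K:ℝ) (1 / P.p x) / (n:ℝ) := by
  have hn' : (0:ℝ) < (n:ℝ) := by exact_mod_cast hn
  refine div_nonneg ?_ (le_of_lt hn')
  rcases eq_or_lt_of_le (P.nonneg x) with hp | hp
  · rw [← hp]
    simp
  · refine Real.logb_nonneg (oneltK hK) ?_
    rw [le_div_iff₀ hp, one_mul]
    exact P.p_le_one x

lemma spec_univ {α : Type*} {K : ℕ} (hK : 2 ≤ K) (P : Dist α) {n : ℕ} (hn : 1 ≤ n)
    {τ : ℝ} (hτ : τ < 0) :
    {x : α | Real.logb (K:ℝ) (1 / P.p x) / (n:ℝ) > τ} = Set.univ :=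
  Set.eq_univ_of_forall (fun x => lt_of_lt_of_le hτ (spec_nonneg hK P hn x))

lemma sqrt_nat_atTop : Tendsto (fun n : ℕ => Real.sqrt (n:ℝ)) atTop atTop := by
  refine tendsto_atTop.mpr (fun b => ?_)
  filter_upwards [eventually_ge_atTop ⌈b^2⌉₊] with n hn
  rcases le_or_gt b 0 with hb | hb
  · exact le_trans hb (Real.sqrt_nonneg _)
  · rw [show b = Real.sqrt (b^2) from (Real.sqrt_sq hb.le).symm]
    apply Real.sqrt_le_sqrt
    calc b^2 ≤ (⌈b^2⌉₊ : ℝ) := Nat.le_ceil _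
      _ ≤ (n:ℝ) := by exact_mod_cast hn

lemma nat_cast_atTop : Tendsto (fun n : ℕ => (n:ℝ)) atTop atTop :=
  tendsto_natCast_atTop_atTop

lemma thr2 (R v : ℝ) (n : ℕ) :
    (n:ℝ) * (R + v / Real.sqrt (n:ℝ)) = (n:ℝ) * R + Real.sqrt (n:ℝ) * v := by
  have h1 : (n:ℝ) * (v / Real.sqrt (n:ℝ)) = ((n:ℝ) / Real.sqrt (n:ℝ)) * v := by ring
  rw [mul_add, h1, Real.div_sqrt]

/-- first-order gap -/
lemma gap1 {γ : ℝ} (hγ : 0 < γ) (v : ℝ) :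
    Tendsto (fun n : ℕ => (n:ℝ) * (v + γ) - (n:ℝ) * v) atTop atTop := by
  have h : Tendsto (fun n : ℕ => (n:ℝ) * γ) atTop atTop :=
    Tendsto.atTop_mul_const hγ nat_cast_atTop
  exact h.congr (fun n => by ring)

lemma theta1_inf {v : ℝ} (hv : 0 < v) :
    Tendsto (fun n : ℕ => (n:ℝ) * v) atTop atTop :=
  Tendsto.atTop_mul_const hv nat_cast_atTop

/-- second-order gap -/
lemma gap2 {γ : ℝ} (hγ : 0 < γ) (R v : ℝ) :
    Tendsto (fun n : ℕ => (n:ℝ) * (R + (v + γ) / Real.sqrt (n:ℝ)) -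
      (n:ℝ) * (R + v / Real.sqrt (n:ℝ))) atTop atTop := by
  have h : Tendsto (fun n : ℕ => Real.sqrt (n:ℝ) * γ) atTop atTop :=
    Tendsto.atTop_mul_const hγ sqrt_nat_atTop
  refine h.congr (fun n => ?_)
  rw [thr2, thr2]
  ring

lemma theta2_inf {R v : ℝ} (hR : 0 ≤ R) {n0 : ℕ} (hvR : 0 ≤ Real.sqrt (n0:ℝ) * R + v)
    {m : ℝ} (hm : v < m) :
    Tendsto (fun n : ℕ => (n:ℝ) * (R + m / Real.sqrt (n:ℝ))) atTop atTop := by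
  have hbase : Tendsto (fun n : ℕ => Real.sqrt (n:ℝ) * (m - v)) atTop atTop :=
    Tendsto.atTop_mul_const (by linarith) sqrt_nat_atTop
  refine tendsto_atTop_mono' atTop ?_ hbase
  filter_upwards [eventually_ge_atTop n0] with n hn
  rw [thr2]
  have h1 : Real.sqrt (n0:ℝ) ≤ Real.sqrt (n:ℝ) := Real.sqrt_le_sqrt (by exact_mod_cast hn)
  have h2 : Real.sqrt (n:ℝ) * Real.sqrt (n0:ℝ) ≤ (n:ℝ) := by
    calc Real.sqrt (n:ℝ) * Real.sqrt (n0:ℝ) ≤ Real.sqrt (n:ℝ) * Real.sqrt (n:ℝ) :=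
          mul_le_mul_of_nonneg_left h1 (Real.sqrt_nonneg _)
      _ = (n:ℝ) := Real.mul_self_sqrt (Nat.cast_nonneg n)
  have h4 : 0 ≤ Real.sqrt (n:ℝ) * (Real.sqrt (n0:ℝ) * R + v) :=
    mul_nonneg (Real.sqrt_nonneg _) hvR
  have h5 : Real.sqrt (n:ℝ) * Real.sqrt (n0:ℝ) * R ≤ (n:ℝ) * R :=
    mul_le_mul_of_nonneg_right h2 hR
  nlinarith [h4, h5]

lemma liminf_one {𝒳 : Type*} (X : Source 𝒳) {S : ∀ n, Set (Fin n → 𝒳)}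
    (h : ∀ n, 1 ≤ n → S n = Set.univ) :
    liminf (fun n => (X n).pr (S n)) atTop = 1 := by
  have hev : ∀ᶠ n : ℕ in atTop, (X n).pr (S n) = (1:ℝ) := by
    filter_upwards [eventually_ge_atTop 1] with n hn
    rw [h n hn, (X n).pr_univ]
  rw [liminf_congr hev]
  exact liminf_const 1

lemma Hstar_nonneg {𝒳 : Type*} {K : ℕ} (hK : 2 ≤ K) (X : Source 𝒳) {g R : ℝ} (hg1 : g < 1)
    (hmem : liminf (fun n => (X n).pr
      {x | Real.logb (K:ℝ) (1 / (X n).p x) / (n:ℝ) > R}) atTop ≤ g) : 0 ≤ R := by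
  by_contra h
  push_neg at h
  rw [liminf_one X (fun n hn => spec_univ hK (X n) hn h)] at hmem
  linarith

lemma exists_n0 {𝒳 : Type*} {K : ℕ} (hK : 2 ≤ K) (X : Source 𝒳) {g R v : ℝ} (hg1 : g < 1)
    (hR : 0 ≤ R)
    (hlim : liminf (fun n => (X n).pr
      {x | Real.logb (K:ℝ) (1 / (X n).p x) / (n:ℝ) > R + v / Real.sqrt (n:ℝ)}) atTop ≤ g) :
    ∃ n0 : ℕ, 0 ≤ Real.sqrt (n0:ℝ) * R + v := by
  have hcob : IsCoboundedUnder (· ≥ ·) atTop (fun n => (X n).pr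
      {x | Real.logb (K:ℝ) (1 / (X n).p x) / (n:ℝ) > R + v / Real.sqrt (n:ℝ)}) :=
    Filter.isCoboundedUnder_ge_of_le atTop (fun n => (X n).pr_le_one _)
  have hfreq := frequently_lt_of_liminf_lt hcob (lt_of_le_of_lt hlim
    (show g < (g+1)/2 by linarith))
  obtain ⟨n, hn⟩ := (hfreq.and_eventually (eventually_ge_atTop 1)).exists
  obtain ⟨hnP, hn1⟩ := hn
  refine ⟨n, ?_⟩
  by_contra hneg
  push_neg at hneg
  have hτ : R + v / Real.sqrt (n:ℝ) < 0 := by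
    have hs : 0 < Real.sqrt (n:ℝ) := Real.sqrt_pos.mpr (by exact_mod_cast hn1)
    rw [← sub_neg]
    have : (R + v / Real.sqrt (n:ℝ)) * Real.sqrt (n:ℝ) = Real.sqrt (n:ℝ) * R + v := by
      field_simp
    nlinarith [this]
  rw [spec_univ hK (X n) hn1 hτ, (X n).pr_univ] at hnP
  linarith

lemma liminf_mono_spec {𝒳 : Type*} {K : ℕ} (X : Source 𝒳) (t1 t2 : ℕ → ℝ)
    (h : ∀ n, t1 n ≤ t2 n) :
    liminf (fun n => (X n).pr
      {x | Real.logb (K:ℝ) (1 / (X n).p x) / (n:ℝ) > t2 n}) atTop ≤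
    liminf (fun n => (X n).pr
      {x | Real.logb (K:ℝ) (1 / (X n).p x) / (n:ℝ) > t1 n}) atTop := by
  refine liminf_le_liminf (Eventually.of_forall (fun n => ?_)) (prBdd X _)
    (Filter.isCoboundedUnder_ge_of_le atTop (fun n => (X n).pr_le_one _))
  exact (X n).pr_mono (fun x hx => lt_of_le_of_lt (h n) hx)

end S17
namespace S17

variable {𝒳 : Type*} [Countable 𝒳] {K : ℕ}

lemma Mpos {M : ℕ} (X : Source 𝒳) (n : ℕ) (φ : (Fin n → 𝒳) → Fin M) : 0 < M := by
  have h : Nonempty (Fin n → 𝒳) := (X n).nonempty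
  exact (φ h.some).pos

lemma shift_mono {ns : ℕ → ℕ} (h : StrictMono ns) : StrictMono (fun i => ns (i + 1)) :=
  fun a b hab => h (by omega)

lemma shift_ge_one {ns : ℕ → ℕ} (h : StrictMono ns) (i : ℕ) : 1 ≤ ns (i + 1) :=
  lt_of_le_of_lt (Nat.zero_le (ns 0)) (h (Nat.succ_pos i))

/-- W1 : variable-length converse, first order. -/
lemma w1 (hK : 2 ≤ K) (X : Source 𝒳) {ε δ : ℝ}
    (hε0 : 0 ≤ ε) (hδ0 : 0 ≤ δ) (hεδ : ε + δ < 1) {v : ℝ} (hv : OptFirstAch K X ε δ v)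
    {γ : ℝ} (hγ : 0 < γ) :
    liminf (fun n => (X n).pr
      {x | Real.logb (K:ℝ) (1 / (X n).p x) / (n:ℝ) > v + γ}) atTop ≤ ε + δ := by
  obtain ⟨hv0, φ, ψ, hach⟩ := hv
  exact genConvVL hK X hε0 hδ0 hεδ (fun _ => v) (fun _ => v + γ) (gap1 hγ v) φ ψ hach

/-- W2 : variable-length direct, first order. -/
lemma w2 (hK : 2 ≤ K) (X : Source 𝒳) {ε δ : ℝ}
    (hε0 : 0 ≤ ε) (hδ0 : 0 ≤ δ) (hεδ : ε + δ < 1) {v γ : ℝ} (hγ : 0 < γ)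
    (hmem : liminf (fun n => (X n).pr
      {x | Real.logb (K:ℝ) (1 / (X n).p x) / (n:ℝ) > v}) atTop ≤ ε + δ) :
    OptFirstAch K X ε δ (v + γ) := by
  have hv0 : 0 ≤ v := Hstar_nonneg hK X hεδ hmem
  have hlim2 : liminf (fun n => (X n).pr
      {x | Real.logb (K:ℝ) (1 / (X n).p x) / (n:ℝ) > v + γ/2}) atTop ≤ ε + δ :=
    le_trans (liminf_mono_spec X (fun _ => v) (fun _ => v + γ/2) (fun n => by linarith)) hmem
  have hgap : Tendsto (fun n : ℕ => (n:ℝ) * (v + γ) - (n:ℝ) * (v + γ/2)) atTop atTop :=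
    (gap1 (show (0:ℝ) < γ/2 by linarith) (v + γ/2)).congr (fun n => by ring)
  obtain ⟨φ, ψ, hach⟩ := genDirVL hK X hε0 hδ0 (fun _ => v + γ/2) (fun _ => v + γ)
    (theta1_inf (by linarith)) hgap hlim2
  refine ⟨by linarith, φ, ψ, fun γ' hγ' => ?_⟩
  obtain ⟨ns, hmono, hns⟩ := hach γ' hγ'
  exact ⟨ns, hmono, fun i => ⟨(hns i).2.1, (hns i).2.2⟩⟩

/-- W3 : fixed-length converse, first order. -/
lemma w3 (hK : 2 ≤ K) (X : Source 𝒳) {g : ℝ} (hg0 : 0 ≤ g) {v γ : ℝ} (hγ : 0 < γ)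
    (hv : FixAchR K X g v) :
    liminf (fun n => (X n).pr
      {x | Real.logb (K:ℝ) (1 / (X n).p x) / (n:ℝ) > v + γ}) atTop ≤ g := by
  obtain ⟨M, φ, ψ, hach⟩ := hv
  have hM : ∀ n, 0 < M n := fun n => Mpos X n (φ n)
  have hgap : Tendsto (fun n : ℕ => (n:ℝ) * (v + γ) - (n:ℝ) * (v + γ/2)) atTop atTop :=
    (gap1 (show (0:ℝ) < γ/2 by linarith) (v + γ/2)).congr (fun n => by ring)
  refine genConvFL hK X hg0 (fun _ => v + γ/2) (fun _ => v + γ) hgap hM φ ψ ?_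
  intro γ' hγ'
  obtain ⟨ns, hmono, hns⟩ := hach (min γ' (γ/2)) (lt_min hγ' (by linarith))
  refine ⟨fun i => ns (i + 1), shift_mono hmono, fun i => ?_⟩
  obtain ⟨herr, hrate⟩ := hns (i + 1)
  have h1 : 1 ≤ ns (i + 1) := shift_ge_one hmono i
  refine ⟨h1, le_trans herr (by have := min_le_left γ' (γ/2); linarith), ?_⟩
  have hn' : (0:ℝ) < (ns (i+1) : ℝ) := by exact_mod_cast h1
  rw [div_le_iff₀ hn'] at hrate
  have hmin := min_le_right γ' (γ/2)
  calc Real.logb (K:ℝ) (M (ns (i+1)) : ℝ) ≤ (v + min γ' (γ/2)) * (ns (i+1) : ℝ) := hrate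
    _ ≤ (ns (i+1) : ℝ) * (v + γ/2) := by nlinarith

/-- W4 : fixed-length direct, first order. -/
lemma w4 (hK : 2 ≤ K) (X : Source 𝒳) {g : ℝ} (hg0 : 0 ≤ g) (hg1 : g < 1) {v γ : ℝ}
    (hγ : 0 < γ)
    (hmem : liminf (fun n => (X n).pr
      {x | Real.logb (K:ℝ) (1 / (X n).p x) / (n:ℝ) > v}) atTop ≤ g) :
    FixAchR K X g (v + γ) := by
  have hv0 : 0 ≤ v := Hstar_nonneg hK X hg1 hmem
  have hlim2 : liminf (fun n => (X n).pr
      {x | Real.logb (K:ℝ) (1 / (X n).p x) / (n:ℝ) > v + γ/2}) atTop ≤ g :=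
    le_trans (liminf_mono_spec X (fun _ => v) (fun _ => v + γ/2) (fun n => by linarith)) hmem
  have hgap : Tendsto (fun n : ℕ => (n:ℝ) * (v + γ) - (n:ℝ) * (v + γ/2)) atTop atTop :=
    (gap1 (show (0:ℝ) < γ/2 by linarith) (v + γ/2)).congr (fun n => by ring)
  obtain ⟨M, φ, ψ, hach⟩ := genDirFL hK X hg0 (fun _ => v + γ/2) (fun _ => v + γ)
    (theta1_inf (by linarith)) hgap hlim2
  refine ⟨M, φ, ψ, fun γ' hγ' => ?_⟩
  obtain ⟨ns, hmono, hns⟩ := hach γ' hγ'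
  refine ⟨ns, hmono, fun i => ?_⟩
  obtain ⟨h1, herr, hrate⟩ := hns i
  refine ⟨herr, ?_⟩
  have hn' : (0:ℝ) < (ns i : ℝ) := by exact_mod_cast h1
  rw [div_le_iff₀ hn']
  calc Real.logb (K:ℝ) (M (ns i) : ℝ) ≤ (ns i : ℝ) * (v + γ) := hrate
    _ ≤ (v + γ + γ') * (ns i : ℝ) := by nlinarith

/-- W5 : variable-length converse, second order. -/
lemma w5 (hK : 2 ≤ K) (X : Source 𝒳) {ε δ : ℝ}
    (hε0 : 0 ≤ ε) (hδ0 : 0 ≤ δ) (hεδ : ε + δ < 1) {R v γ : ℝ} (hγ : 0 < γ)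
    (hv : OptSecondAch K X ε δ R v) :
    liminf (fun n => (X n).pr
      {x | Real.logb (K:ℝ) (1 / (X n).p x) / (n:ℝ) >
        R + (v + γ) / Real.sqrt (n:ℝ)}) atTop ≤ ε + δ := by
  obtain ⟨φ, ψ, hach⟩ := hv
  have hach' : ∀ γ' > (0:ℝ), ∃ ns : ℕ → ℕ, StrictMono ns ∧ ∀ i,
      errP (X (ns i)) (φ (ns i)) (ψ (ns i)) ≤ ε + γ' ∧
      ovP (X (ns i)) (φ (ns i)) ((ns i : ℝ) * (R + v / Real.sqrt (ns i : ℝ))) ≤ δ + γ' := by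
    intro γ' hγ'
    obtain ⟨ns, hmono, hns⟩ := hach γ' hγ'
    refine ⟨ns, hmono, fun i => ⟨(hns i).1, ?_⟩⟩
    rw [thr2]
    exact (hns i).2
  exact genConvVL hK X hε0 hδ0 hεδ (fun n => R + v / Real.sqrt (n:ℝ))
    (fun n => R + (v + γ) / Real.sqrt (n:ℝ)) (gap2 hγ R v) φ ψ hach'

lemma spec2_mono (X : Source 𝒳) (R : ℝ) {a b : ℝ} (hab : a ≤ b) (n : ℕ) :
    R + a / Real.sqrt (n:ℝ) ≤ R + b / Real.sqrt (n:ℝ) := by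
  have h2 : a * (Real.sqrt (n:ℝ))⁻¹ ≤ b * (Real.sqrt (n:ℝ))⁻¹ :=
    mul_le_mul_of_nonneg_right hab (inv_nonneg.mpr (Real.sqrt_nonneg _))
  rw [div_eq_mul_inv, div_eq_mul_inv]
  linarith

lemma gap2' {γ : ℝ} (hγ : 0 < γ) (R v : ℝ) :
    Tendsto (fun n : ℕ => (n:ℝ) * (R + (v + γ) / Real.sqrt (n:ℝ)) -
      (n:ℝ) * (R + (v + γ/2) / Real.sqrt (n:ℝ))) atTop atTop := by
  have h := gap2 (show (0:ℝ) < γ/2 by linarith) R (v + γ/2)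
  refine h.congr (fun n => ?_)
  rw [show v + γ/2 + γ/2 = v + γ by ring]

/-- W6 : variable-length direct, second order. -/
lemma w6 (hK : 2 ≤ K) (X : Source 𝒳) {ε δ : ℝ}
    (hε0 : 0 ≤ ε) (hδ0 : 0 ≤ δ) (hεδ : ε + δ < 1) {R : ℝ} (hR : 0 ≤ R) {v γ : ℝ}
    (hγ : 0 < γ)
    (hmem : liminf (fun n => (X n).pr
      {x | Real.logb (K:ℝ) (1 / (X n).p x) / (n:ℝ) >
        R + v / Real.sqrt (n:ℝ)}) atTop ≤ ε + δ) :
    OptSecondAch K X ε δ R (v + γ) := by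
  obtain ⟨n0, hn0⟩ := exists_n0 hK X hεδ hR hmem
  have hlim2 : liminf (fun n => (X n).pr
      {x | Real.logb (K:ℝ) (1 / (X n).p x) / (n:ℝ) >
        R + (v + γ/2) / Real.sqrt (n:ℝ)}) atTop ≤ ε + δ :=
    le_trans (liminf_mono_spec X _ _ (spec2_mono X R (by linarith))) hmem
  obtain ⟨φ, ψ, hach⟩ := genDirVL hK X hε0 hδ0 (fun n => R + (v + γ/2) / Real.sqrt (n:ℝ))
    (fun n => R + (v + γ) / Real.sqrt (n:ℝ))
    ((theta2_inf hR hn0 (show v < v + γ/2 by linarith)).congr (fun n => rfl))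
    (gap2' hγ R v) hlim2
  refine ⟨φ, ψ, fun γ' hγ' => ?_⟩
  obtain ⟨ns, hmono, hns⟩ := hach γ' hγ'
  refine ⟨ns, hmono, fun i => ⟨(hns i).2.1, ?_⟩⟩
  have h2 := (hns i).2.2
  rw [thr2] at h2
  exact h2

/-- W7 : fixed-length converse, second order. -/
lemma w7 (hK : 2 ≤ K) (X : Source 𝒳) {g : ℝ} (hg0 : 0 ≤ g) {R : ℝ} {v γ : ℝ}
    (hγ : 0 < γ) (hv : FixAchL K X g R v) :
    liminf (fun n => (X n).pr
      {x | Real.logb (K:ℝ) (1 / (X n).p x) / (n:ℝ) >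
        R + (v + γ) / Real.sqrt (n:ℝ)}) atTop ≤ g := by
  obtain ⟨M, φ, ψ, hach⟩ := hv
  have hM : ∀ n, 0 < M n := fun n => Mpos X n (φ n)
  have hKpos : (0:ℝ) < (K:ℝ) := by have := oneltK hK; linarith
  refine genConvFL hK X hg0 (fun n => R + (v + γ/2) / Real.sqrt (n:ℝ))
    (fun n => R + (v + γ) / Real.sqrt (n:ℝ)) (gap2' hγ R v) hM φ ψ ?_
  intro γ' hγ'
  obtain ⟨ns, hmono, hns⟩ := hach (min γ' (γ/2)) (lt_min hγ' (by linarith))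
  refine ⟨fun i => ns (i + 1), shift_mono hmono, fun i => ?_⟩
  obtain ⟨herr, hrate⟩ := hns (i + 1)
  have h1 : 1 ≤ ns (i + 1) := shift_ge_one hmono i
  refine ⟨h1, le_trans herr (by have := min_le_left γ' (γ/2); linarith), ?_⟩
  set n := ns (i + 1) with hn
  have hs : 0 < Real.sqrt (n:ℝ) := Real.sqrt_pos.mpr (by exact_mod_cast h1)
  have hMp : (0:ℝ) < (M n : ℝ) := by exact_mod_cast hM n
  have hKp : (0:ℝ) < (K:ℝ) ^ ((n:ℝ) * R) := Real.rpow_pos_of_pos hKpos _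
  have hlogdiv : Real.logb (K:ℝ) ((M n : ℝ) / (K:ℝ) ^ ((n:ℝ) * R)) =
      Real.logb (K:ℝ) (M n : ℝ) - (n:ℝ) * R := by
    rw [Real.logb_div (ne_of_gt hMp) (ne_of_gt hKp),
      Real.logb_rpow hKpos (oneltK hK).ne']
  rw [hlogdiv, div_le_iff₀ hs] at hrate
  rw [thr2]
  have hmin := min_le_right γ' (γ/2)
  have hsn := Real.sqrt_nonneg (n:ℝ)
  nlinarith [hrate]

/-- W8 : fixed-length direct, second order. -/
lemma w8 (hK : 2 ≤ K) (X : Source 𝒳) {g : ℝ} (hg0 : 0 ≤ g) (hg1 : g < 1) {R : ℝ}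
    (hR : 0 ≤ R) {v γ : ℝ} (hγ : 0 < γ)
    (hmem : liminf (fun n => (X n).pr
      {x | Real.logb (K:ℝ) (1 / (X n).p x) / (n:ℝ) >
        R + v / Real.sqrt (n:ℝ)}) atTop ≤ g) :
    FixAchL K X g R (v + γ) := by
  obtain ⟨n0, hn0⟩ := exists_n0 hK X hg1 hR hmem
  have hKpos : (0:ℝ) < (K:ℝ) := by have := oneltK hK; linarith
  have hlim2 : liminf (fun n => (X n).pr
      {x | Real.logb (K:ℝ) (1 / (X n).p x) / (n:ℝ) >
        R + (v + γ/2) / Real.sqrt (n:ℝ)}) atTop ≤ g :=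
    le_trans (liminf_mono_spec X _ _ (spec2_mono X R (by linarith))) hmem
  obtain ⟨M, φ, ψ, hach⟩ := genDirFL hK X hg0 (fun n => R + (v + γ/2) / Real.sqrt (n:ℝ))
    (fun n => R + (v + γ) / Real.sqrt (n:ℝ))
    ((theta2_inf hR hn0 (show v < v + γ/2 by linarith)).congr (fun n => rfl))
    (gap2' hγ R v) hlim2
  refine ⟨M, φ, ψ, fun γ' hγ' => ?_⟩
  obtain ⟨ns, hmono, hns⟩ := hach γ' hγ'
  refine ⟨ns, hmono, fun i => ?_⟩
  obtain ⟨h1, herr, hrate⟩ := hns i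
  refine ⟨herr, ?_⟩
  set n := ns i with hn
  have hs : 0 < Real.sqrt (n:ℝ) := Real.sqrt_pos.mpr (by exact_mod_cast h1)
  have hMp : (0:ℝ) < (M n : ℝ) := by exact_mod_cast Mpos X n (φ n)
  have hKp : (0:ℝ) < (K:ℝ) ^ ((n:ℝ) * R) := Real.rpow_pos_of_pos hKpos _
  have hlogdiv : Real.logb (K:ℝ) ((M n : ℝ) / (K:ℝ) ^ ((n:ℝ) * R)) =
      Real.logb (K:ℝ) (M n : ℝ) - (n:ℝ) * R := by
    rw [Real.logb_div (ne_of_gt hMp) (ne_of_gt hKp),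
      Real.logb_rpow hKpos (oneltK hK).ne']
  rw [hlogdiv, div_le_iff₀ hs]
  rw [thr2] at hrate
  have hsn := Real.sqrt_nonneg (n:ℝ)
  nlinarith [hrate]

end S17

/-- relation to optimistic fixed-length source coding. -/
theorem statement17 {𝒳 : Type*} [Countable 𝒳] (K : ℕ) (hK : 2 ≤ K) (X : Source 𝒳)
    (R ε δ : ℝ) (hR : 0 ≤ R)
    (hε0 : 0 ≤ ε) (hε1 : ε < 1) (hδ0 : 0 ≤ δ) (hδ1 : δ < 1) (hεδ : ε + δ < 1) :
    RoptStar K X ε δ = Rfix K X (ε + δ) ∧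
    Rfix K X (ε + δ) = HbarStar K X (ε + δ) ∧
    LoptStar K X ε δ R = Lfix K X (ε + δ) R ∧
    Lfix K X (ε + δ) R = Hbar2Star K X (ε + δ) R := by
  have hg0 : 0 ≤ ε + δ := by linarith
  have e1 : RoptStar K X ε δ = HbarStar K X (ε + δ) := by
    rw [RoptStar, HbarStar]
    exact S17.sInf_eq_of_forall
      (fun s hs γ hγ => S17.w1 hK X hε0 hδ0 hεδ hs hγ)
      (fun t ht γ hγ => S17.w2 hK X hε0 hδ0 hεδ hγ ht)
  have e2 : Rfix K X (ε + δ) = HbarStar K X (ε + δ) := by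
    rw [Rfix, HbarStar]
    exact S17.sInf_eq_of_forall
      (fun s hs γ hγ => S17.w3 hK X hg0 hγ hs)
      (fun t ht γ hγ => S17.w4 hK X hg0 hεδ hγ ht)
  have e3 : LoptStar K X ε δ R = Hbar2Star K X (ε + δ) R := by
    rw [LoptStar, Hbar2Star]
    exact S17.sInf_eq_of_forall
      (fun s hs γ hγ => S17.w5 hK X hε0 hδ0 hεδ hγ hs)
      (fun t ht γ hγ => S17.w6 hK X hε0 hδ0 hεδ hR hγ ht)
  have e4 : Lfix K X (ε + δ) R = Hbar2Star K X (ε + δ) R := by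
    rw [Lfix, Hbar2Star]
    exact S17.sInf_eq_of_forall
      (fun s hs γ hγ => S17.w7 hK X hg0 hγ hs)
      (fun t ht γ hγ => S17.w8 hK X hg0 hεδ hR hγ ht)
  exact ⟨e1.trans e2.symm, e2, e3.trans e4.symm, e4⟩
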